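/- arXiv:2303.04514 — 10 statements merged into one kernel-verified Lean document; each statement's English description precedes it below -/
import Mathlib

section
/- Let f ∈ ℂ[z] be a polynomial such that f^{(2k)}(0) = 0 and f^{(2k)}(1) = 0 for every integer k ≥ 0, where f^{(2k)} denotes the (2k)-th derivative of f. Then f = 0. -/
/-- **Lemma 1 (Lidstone, one variable).** If a polynomial `f ∈ ℂ[z]` satisfies
`f^{(2k)}(0) = 0` and `f^{(2k)}(1) = 0` for every integer `k ≥ 0`, then `f = 0`. -/
theorem lidstone_unicity_polynomial (f : Polynomial ℂ)
    (h0 : ∀ k : ℕ, (Polynomial.derivative^[2 * k] f).eval 0 = 0)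
    (h1 : ∀ k : ℕ, (Polynomial.derivative^[2 * k] f).eval 1 = 0) :
    f = 0 := by
  suffices H : ∀ n (f : Polynomial ℂ),
      (∀ k : ℕ, (Polynomial.derivative^[2 * k] f).eval 0 = 0) →
      (∀ k : ℕ, (Polynomial.derivative^[2 * k] f).eval 1 = 0) →
      f.natDegree = n → f = 0 from H f.natDegree f h0 h1 rfl
  clear h0 h1 f
  intro n
  induction n using Nat.strong_induction_on with
  | _ n ih =>
    intro f h0 h1 hn
    by_cases hdeg : f.natDegree ≤ 1
    · obtain ⟨a, b, hab⟩ := Polynomial.exists_eq_X_add_C_of_natDegree_le_one hdeg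
      have e0 := h0 0
      have e1 := h1 0
      simp only [mul_zero, Function.iterate_zero, id_eq, hab] at e0 e1 ⊢
      simp only [Polynomial.eval_add, Polynomial.eval_mul, Polynomial.eval_X,
        Polynomial.eval_C, mul_zero, zero_add, mul_one] at e0 e1
      subst e0
      simp only [add_zero] at e1
      simp [e1]
    · push_neg at hdeg
      set g := Polynomial.derivative (Polynomial.derivative f) with hg
      have hgit : g = Polynomial.derivative^[2 * 1] f := by
        simp [hg, Function.iterate_succ, Function.comp]
      have hg0 : ∀ k : ℕ, (Polynomial.derivative^[2 * k] g).eval 0 = 0 := by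
        intro k
        rw [hgit, ← Function.iterate_add_apply, ← mul_add]
        exact h0 (k + 1)
      have hg1 : ∀ k : ℕ, (Polynomial.derivative^[2 * k] g).eval 1 = 0 := by
        intro k
        rw [hgit, ← Function.iterate_add_apply, ← mul_add]
        exact h1 (k + 1)
      have hdf : (Polynomial.derivative f).natDegree = f.natDegree - 1 := by
        have := Polynomial.degree_derivative_eq f (by omega)
        exact Polynomial.natDegree_eq_of_degree_eq_some this
      have hdg : g.natDegree < f.natDegree := by
        calc g.natDegree ≤ (Polynomial.derivative f).natDegree - 1 :=
              Polynomial.natDegree_derivative_le _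
          _ < f.natDegree := by omega
      have hgz : g = 0 := ih g.natDegree (by omega) g hg0 hg1 rfl
      have : (Polynomial.derivative f).natDegree = 0 :=
        Polynomial.natDegree_eq_zero_of_derivative_eq_zero (hg ▸ hgz)
      omega
end

section
/- There exist two sequences of polynomials (Λ_{2k,0})_{k≥0} and (Λ_{2k,1})_{k≥0} in ℂ[z] such that every polynomial f ∈ ℂ[z] satisfies f(z) = Σ_{k≥0} f^{(2k)}(0)·Λ_{2k,0}(z) + Σ_{k≥0} f^{(2k)}(1)·Λ_{2k,1}(z) for all z ∈ ℂ, where both sums are finite because f^{(2k)} = 0 whenever 2k exceeds the degree of f. -/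
open Polynomial Finset

noncomputable def antider (p : ℂ[X]) : ℂ[X] :=
  ∑ i ∈ Finset.range (p.natDegree + 1), C (p.coeff i / (i + 1)) * X ^ (i + 1)

lemma derivative_antider (p : ℂ[X]) : derivative (antider p) = p := by
  rw [antider, map_sum]
  have h : ∀ i ∈ Finset.range (p.natDegree + 1),
      derivative (C (p.coeff i / (i + 1)) * X ^ (i + 1)) = C (p.coeff i) * X ^ i := by
    intro i _
    rw [derivative_C_mul, derivative_X_pow]
    simp only [Nat.add_sub_cancel]
    rw [← mul_assoc, ← C_mul]
    congr 2
    have hne : (i : ℂ) + 1 ≠ 0 := Nat.cast_add_one_ne_zero i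
    push_cast
    field_simp
  rw [Finset.sum_congr rfl h]
  conv_rhs => rw [p.as_sum_range]
  exact Finset.sum_congr rfl fun i _ => C_mul_X_pow_eq_monomial

lemma antider_eval_zero (p : ℂ[X]) : (antider p).eval 0 = 0 := by
  simp [antider, eval_finset_sum]

noncomputable def nextL (p : ℂ[X]) : ℂ[X] :=
  antider (antider p) - (C ((antider (antider p)).eval 0) * (1 - X)
    + C ((antider (antider p)).eval 1) * X)

lemma d2_nextL (p : ℂ[X]) : derivative (derivative (nextL p)) = p := by
  simp [nextL, derivative_antider]

lemma nextL_eval_zero (p : ℂ[X]) : (nextL p).eval 0 = 0 := by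
  simp [nextL]

lemma nextL_eval_one (p : ℂ[X]) : (nextL p).eval 1 = 0 := by
  simp [nextL]

noncomputable def L0 : ℕ → ℂ[X]
  | 0 => 1 - X
  | (k+1) => nextL (L0 k)

noncomputable def L1 : ℕ → ℂ[X]
  | 0 => X
  | (k+1) => nextL (L1 k)

lemma linear_eval {p : ℂ[X]} (h : p.natDegree ≤ 1) (z : ℂ) :
    p.eval z = p.eval 0 * (1 - z) + p.eval 1 * z := by
  obtain ⟨a, b, rfl⟩ : ∃ a b, p = C a * X + C b :=
    ⟨p.coeff 1, p.coeff 0, eq_X_add_C_of_natDegree_le_one h⟩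
  simp only [eval_add, eval_mul, eval_C, eval_X, eval_one]
  ring

lemma natDegree_le_one_of_d2 {p : ℂ[X]} (h : derivative (derivative p) = 0) :
    p.natDegree ≤ 1 := by
  have h1 : (derivative p).natDegree = 0 := natDegree_eq_zero_of_derivative_eq_zero h
  rw [natDegree_le_iff_coeff_eq_zero]
  intro N hN
  have h2 : (derivative p).coeff (N - 1) = 0 := coeff_eq_zero_of_natDegree_lt (by omega)
  rw [coeff_derivative] at h2
  have hN1 : N - 1 + 1 = N := by omega
  rw [hN1] at h2
  have hne : ((N - 1 : ℕ) : ℂ) + 1 ≠ 0 := Nat.cast_add_one_ne_zero _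
  rcases mul_eq_zero.mp h2 with h | h
  · exact h
  · exact absurd h hne

lemma key : ∀ N : ℕ, ∀ f : ℂ[X], f.natDegree < 2 * N + 2 → ∀ z : ℂ,
    f.eval z = (∑ k ∈ range (N + 1), (derivative^[2 * k] f).eval 0 * (L0 k).eval z)
             + (∑ k ∈ range (N + 1), (derivative^[2 * k] f).eval 1 * (L1 k).eval z) := by
  intro N
  induction N with
  | zero =>
    intro f hf z
    simp only [Nat.zero_add, zero_add, range_one, sum_singleton, Nat.mul_zero, mul_zero, Function.iterate_zero, id_eq]
    rw [show L0 0 = 1 - X from rfl, show L1 0 = X from rfl]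
    rw [linear_eval (show f.natDegree ≤ 1 by omega) z]
    simp
  | succ N ih =>
    intro f hf z
    set g : ℂ[X] := derivative (derivative f) with hg
    have hgdeg : g.natDegree < 2 * N + 2 := by
      rw [hg]
      have h1 := natDegree_derivative_le f
      have h2 := natDegree_derivative_le (derivative f)
      omega
    set F : ℂ[X] := C (f.eval 0) * L0 0 + C (f.eval 1) * L1 0
        + ∑ k ∈ range (N + 1), C ((derivative^[2 * k] g).eval 0) * L0 (k + 1)
        + ∑ k ∈ range (N + 1), C ((derivative^[2 * k] g).eval 1) * L1 (k + 1) with hF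
    have e0 : ∀ k, derivative (derivative (L0 (k+1))) = L0 k := fun k => d2_nextL _
    have e1 : ∀ k, derivative (derivative (L1 (k+1))) = L1 k := fun k => d2_nextL _
    have hd2F : derivative (derivative F) = g := by
      apply Polynomial.funext
      intro r
      have hih := ih g hgdeg r
      rw [hF]
      simp only [derivative_add, derivative_sum, derivative_C_mul]
      rw [show L0 0 = 1 - X from rfl, show L1 0 = X from rfl]
      simp only [derivative_sub, derivative_one, derivative_X, zero_sub, derivative_neg,
        derivative_C, e0, e1]
      simp only [eval_add, eval_finset_sum, eval_mul, eval_C, eval_neg, eval_zero]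
      rw [hih]
      ring
    have hh2 : derivative (derivative (f - F)) = 0 := by
      simp [derivative_sub, hd2F, ← hg]
    have hhdeg : (f - F).natDegree ≤ 1 := natDegree_le_one_of_d2 hh2
    have hF0 : F.eval 0 = f.eval 0 := by
      rw [hF]
      simp [show L0 0 = 1 - X from rfl, show L1 0 = X from rfl,
        show ∀ k, L0 (k+1) = nextL (L0 k) from fun _ => rfl,
        show ∀ k, L1 (k+1) = nextL (L1 k) from fun _ => rfl,
        nextL_eval_zero, eval_finset_sum]
    have hF1 : F.eval 1 = f.eval 1 := by
      rw [hF]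
      simp [show L0 0 = 1 - X from rfl, show L1 0 = X from rfl,
        show ∀ k, L0 (k+1) = nextL (L0 k) from fun _ => rfl,
        show ∀ k, L1 (k+1) = nextL (L1 k) from fun _ => rfl,
        nextL_eval_zero, nextL_eval_one, eval_finset_sum]
    have hfF : f.eval z = F.eval z := by
      have hz := linear_eval hhdeg z
      simp only [eval_sub, hF0, hF1, sub_self, zero_mul, add_zero, mul_zero] at hz
      linear_combination hz
    have hiter : ∀ k : ℕ, derivative^[2 * (k + 1)] f = derivative^[2 * k] g := by
      intro k
      have : 2 * (k + 1) = 2 * k + 2 := by ring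
      rw [this, Function.iterate_add_apply]
      rfl
    rw [hfF, hF]
    simp only [eval_add, eval_finset_sum, eval_mul, eval_C]
    rw [Finset.sum_range_succ' (fun k => (derivative^[2 * k] f).eval 0 * (L0 k).eval z) (N + 1),
        Finset.sum_range_succ' (fun k => (derivative^[2 * k] f).eval 1 * (L1 k).eval z) (N + 1)]
    simp only [hiter, Nat.mul_zero, Function.iterate_zero, id_eq]
    ring

/-- **Theorem (Lidstone, 1930).** There exist two sequences of polynomials
`(Λ_{2k,0})_{k≥0}` and `(Λ_{2k,1})_{k≥0}` in `ℂ[z]` such that every polynomial `f`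
has the (finite) expansion
`f(z) = Σ_k f^{(2k)}(0)·Λ_{2k,0}(z) + Σ_k f^{(2k)}(1)·Λ_{2k,1}(z)`.
The sums are finite since `f^{(2k)} = 0` for `2k > deg f`; we express them with `∑ᶠ`. -/
theorem lidstone_expansion_polynomial :
    ∃ Λ₀ Λ₁ : ℕ → Polynomial ℂ,
      ∀ f : Polynomial ℂ, ∀ z : ℂ,
        f.eval z =
          (∑ᶠ k : ℕ, (Polynomial.derivative^[2 * k] f).eval 0 * (Λ₀ k).eval z) +
          (∑ᶠ k : ℕ, (Polynomial.derivative^[2 * k] f).eval 1 * (Λ₁ k).eval z) := by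
  refine ⟨L0, L1, fun f z => ?_⟩
  have hsupp : ∀ (a : ℂ) (Λ : ℕ → ℂ[X]),
      (Function.support fun k => (derivative^[2 * k] f).eval a * (Λ k).eval z)
        ⊆ ↑(range (f.natDegree + 1)) := by
    intro a Λ k hk
    simp only [Function.mem_support] at hk
    simp only [Finset.coe_range, Set.mem_Iio]
    by_contra hc
    push_neg at hc
    have : derivative^[2 * k] f = 0 := iterate_derivative_eq_zero (by omega)
    rw [this] at hk
    simp at hk
  rw [finsum_eq_finset_sum_of_support_subset _ (hsupp 0 L0),
      finsum_eq_finset_sum_of_support_subset _ (hsupp 1 L1)]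
  exact key f.natDegree f (by omega) z
end

section
/- For each integer k ≥ 0 there exists a unique polynomial Λ ∈ ℂ[z] such that Λ^{(2j)}(0) = 0 for every integer j ≥ 0 and Λ^{(2j)}(1) = δ_{jk} (Kronecker delta) for every integer j ≥ 0. -/
open Polynomial

private lemma antideriv (p : ℂ[X]) : ∃ q : ℂ[X], derivative q = p := by
  induction p using Polynomial.induction_on' with
  | add f g hf hg =>
    obtain ⟨qf, hqf⟩ := hf; obtain ⟨qg, hqg⟩ := hg
    exact ⟨qf + qg, by simp [hqf, hqg]⟩
  | monomial n a =>
    refine ⟨C (a / (n + 1)) * X ^ (n + 1), ?_⟩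
    have hne : ((n : ℂ) + 1) ≠ 0 := Nat.cast_add_one_ne_zero n
    rw [derivative_C_mul, derivative_X_pow, Nat.add_sub_cancel, Nat.cast_add_one,
      ← mul_assoc, ← C_mul, div_mul_cancel₀ a hne, C_mul_X_pow_eq_monomial]

private lemma unique_aux : ∀ n : ℕ, ∀ D : ℂ[X], D.natDegree = n →
    (∀ j : ℕ, (derivative^[2 * j] D).eval 0 = 0) →
    (∀ j : ℕ, (derivative^[2 * j] D).eval 1 = 0) → D = 0 := by
  intro n
  induction n using Nat.strong_induction_on with
  | _ n ih =>
    intro D hn h0 h1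
    by_cases hle : D.natDegree ≤ 1
    · have e0 : D.eval 0 = 0 := by simpa using h0 0
      have e1 : D.eval 1 = 0 := by simpa using h1 0
      have hD : D = C (D.coeff 1) * X + C (D.coeff 0) :=
        eq_X_add_C_of_degree_le_one (degree_le_of_natDegree_le hle)
      rw [hD] at e0 e1 ⊢
      simp only [eval_add, eval_mul, eval_C, eval_X, mul_zero, zero_add, mul_one] at e0 e1
      rw [e0] at e1 ⊢
      simp only [add_zero] at e1
      simp [e1]
    · push_neg at hle
      set E := derivative (derivative D) with hE
      have hE0 : ∀ j : ℕ, (derivative^[2 * j] E).eval 0 = 0 := by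
        intro j
        have := h0 (j + 1)
        rwa [show 2 * (j + 1) = 2 * j + 2 by ring, Function.iterate_add_apply] at this
      have hE1 : ∀ j : ℕ, (derivative^[2 * j] E).eval 1 = 0 := by
        intro j
        have := h1 (j + 1)
        rwa [show 2 * (j + 1) = 2 * j + 2 by ring, Function.iterate_add_apply] at this
      have hnn : 2 ≤ n := by omega
      have hlt : E.natDegree < n := by
        by_cases h' : (derivative D).natDegree = 0
        · have hEz : E = 0 := by
            rw [hE, eq_C_of_natDegree_eq_zero h', derivative_C]
          rw [hEz, natDegree_zero]; omega
        · calc E.natDegree < (derivative D).natDegree := natDegree_derivative_lt h'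
            _ < D.natDegree := natDegree_derivative_lt (by omega)
            _ = n := hn
      have hEz : E = 0 := ih _ hlt E rfl hE0 hE1
      have h2 : derivative D = C ((derivative D).coeff 0) := eq_C_of_derivative_eq_zero hEz
      have h3 : derivative (D - C ((derivative D).coeff 0) * X) = 0 := by
        rw [derivative_sub, derivative_C_mul, derivative_X, mul_one, ← h2, sub_self]
      have h4 := eq_C_of_derivative_eq_zero h3
      have h5 : D.natDegree ≤ 1 := by
        rw [sub_eq_iff_eq_add.mp h4, add_comm]
        exact natDegree_linear_le
      omega

/-- For each `k ≥ 0` there is a unique polynomial `Λ ∈ ℂ[z]` with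
`Λ^{(2j)}(0) = 0` and `Λ^{(2j)}(1) = δ_{jk}` for all `j ≥ 0`. -/
theorem lidstone_polynomial_exists_unique (k : ℕ) :
    ∃! Λ : Polynomial ℂ,
      (∀ j : ℕ, (Polynomial.derivative^[2 * j] Λ).eval 0 = 0) ∧
      (∀ j : ℕ, (Polynomial.derivative^[2 * j] Λ).eval 1 = if j = k then 1 else 0) := by
  have exist : ∀ k : ℕ, ∃ Λ : ℂ[X],
      (∀ j : ℕ, (derivative^[2 * j] Λ).eval 0 = 0) ∧
      (∀ j : ℕ, (derivative^[2 * j] Λ).eval 1 = if j = k then 1 else 0) := by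
    intro k
    induction k with
    | zero =>
      refine ⟨X, fun j => ?_, fun j => ?_⟩ <;>
      · match j with
        | 0 => simp
        | j + 1 =>
          rw [show 2 * (j + 1) = 2 * j + 2 by ring, Function.iterate_add_apply]
          simp
    | succ k ihk =>
      obtain ⟨Λ, hΛ0, hΛ1⟩ := ihk
      obtain ⟨Q1, hQ1⟩ := antideriv Λ
      obtain ⟨Q, hQ⟩ := antideriv Q1
      set P : ℂ[X] := Q - C (Q.eval 0) - C (Q.eval 1 - Q.eval 0) * X with hP
      have hPdd : derivative (derivative P) = Λ := by
        simp [hP, hQ, hQ1]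
      have hiter : ∀ j : ℕ, derivative^[2 * (j + 1)] P = derivative^[2 * j] Λ := by
        intro j
        rw [show 2 * (j + 1) = 2 * j + 2 by ring, Function.iterate_add_apply]
        simp [hPdd]
      refine ⟨P, fun j => ?_, fun j => ?_⟩
      · match j with
        | 0 => simp [hP]
        | j + 1 => rw [hiter]; exact hΛ0 j
      · match j with
        | 0 => simp [hP]
        | j + 1 =>
          rw [hiter, hΛ1 j]
          simp [Nat.succ_inj]
  obtain ⟨Λ, h0, h1⟩ := exist k
  refine ⟨Λ, ⟨h0, h1⟩, ?_⟩
  rintro Λ' ⟨h0', h1'⟩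
  have hD : Λ' - Λ = 0 := by
    apply unique_aux (Λ' - Λ).natDegree _ rfl
    · intro j
      have : derivative^[2 * j] (Λ' - Λ) = derivative^[2 * j] Λ' - derivative^[2 * j] Λ := by
        induction (2 * j) with
        | zero => rfl
        | succ m ihm => rw [Function.iterate_succ_apply', Function.iterate_succ_apply',
            Function.iterate_succ_apply', ihm, derivative_sub]
      simp [this, h0 j, h0' j]
    · intro j
      have : derivative^[2 * j] (Λ' - Λ) = derivative^[2 * j] Λ' - derivative^[2 * j] Λ := by
        induction (2 * j) with
        | zero => rfl
        | succ m ihm => rw [Function.iterate_succ_apply', Function.iterate_succ_apply',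
            Function.iterate_succ_apply', ihm, derivative_sub]
      simp [this, h1 j, h1' j]
  linear_combination (norm := ring_nf) hD
end

section
/- For every integer k ≥ 0 and every z ∈ ℂ, z^{2k}/(2k)! = Λ_{2k,0}(z) + Σ_{j=0}^{k} Λ_{2j,1}(z)/(2k − 2j)!. -/
open Polynomial

/-- A polynomial all of whose even derivatives vanish at 0 and 1 is zero. -/
lemma lidstone_aux : ∀ (n : ℕ) (q : ℂ[X]), q.natDegree ≤ n →
    (∀ j, (derivative^[2*j] q).eval 0 = 0) →
    (∀ j, (derivative^[2*j] q).eval 1 = 0) → q = 0 := by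
  intro n
  induction n with
  | zero =>
    intro q hq h0 _
    have hc := Polynomial.eq_C_of_natDegree_eq_zero (Nat.le_zero.mp hq)
    have e0 := h0 0
    simp only [Nat.mul_zero, Function.iterate_zero_apply] at e0
    rw [hc] at e0 ⊢
    simpa using e0
  | succ n ih =>
    intro q hq h0 h1
    have h2 : derivative (derivative q) = 0 := by
      apply ih
      · have := Polynomial.natDegree_derivative_le q
        have := Polynomial.natDegree_derivative_le (derivative q)
        omega
      · intro j
        have := h0 (j+1)
        rwa [show 2*(j+1) = 2*j + 2 by ring, Function.iterate_add_apply,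
          show derivative^[2] q = derivative (derivative q) by
            simp [Function.iterate_succ_apply]] at this
      · intro j
        have := h1 (j+1)
        rwa [show 2*(j+1) = 2*j + 2 by ring, Function.iterate_add_apply,
          show derivative^[2] q = derivative (derivative q) by
            simp [Function.iterate_succ_apply]] at this
    have dq0 : (derivative q).natDegree = 0 :=
      Polynomial.natDegree_eq_zero_of_derivative_eq_zero h2
    have hq1 : q.natDegree ≤ 1 := by
      by_contra h
      push_neg at h
      have hne : q ≠ 0 := fun hz => by simp [hz] at h
      have hlc : q.coeff q.natDegree ≠ 0 := Polynomial.leadingCoeff_ne_zero.mpr hne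
      have hco := Polynomial.coeff_derivative q (q.natDegree - 1)
      have hd1 : q.natDegree - 1 + 1 = q.natDegree := by omega
      rw [hd1] at hco
      have hz : (derivative q).coeff (q.natDegree - 1) = 0 :=
        Polynomial.coeff_eq_zero_of_natDegree_lt (by omega)
      rw [hz] at hco
      have hne2 : (((q.natDegree - 1 : ℕ)) : ℂ) + 1 ≠ 0 := by
        have he : (((q.natDegree - 1 : ℕ)) : ℂ) + 1 = ((q.natDegree - 1 + 1 : ℕ) : ℂ) := by
          push_cast; ring
        rw [he, hd1]
        exact Nat.cast_ne_zero.mpr (by omega)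
      rcases mul_eq_zero.mp hco.symm with h' | h'
      · exact hlc h'
      · exact hne2 h' 
    obtain ⟨a, b, rfl⟩ := Polynomial.exists_eq_X_add_C_of_natDegree_le_one hq1
    have e0 := h0 0
    have e1 := h1 0
    simp only [Nat.mul_zero, Function.iterate_zero_apply, eval_add, eval_mul, eval_C, eval_X,
      mul_zero, zero_add, mul_one] at e0 e1
    rw [e0] at e1 ⊢
    simp only [add_zero] at e1
    simp [e1]

/-- For every `k ≥ 0` and `z ∈ ℂ`,
`z^{2k}/(2k)! = Λ_{2k,0}(z) + Σ_{j=0}^{k} Λ_{2j,1}(z)/(2k−2j)!`,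
where `Λ_{2k,1}` are the Lidstone polynomials and `Λ_{2k,0}(z) = Λ_{2k,1}(1 − z)`. -/
theorem lidstone_polynomial_power_expansion (Λ : ℕ → Polynomial ℂ)
    (hΛ0 : ∀ k j : ℕ, (Polynomial.derivative^[2 * j] (Λ k)).eval 0 = 0)
    (hΛ1 : ∀ k j : ℕ,
      (Polynomial.derivative^[2 * j] (Λ k)).eval 1 = if j = k then 1 else 0) :
    ∀ k : ℕ, ∀ z : ℂ,
      z ^ (2 * k) / (Nat.factorial (2 * k) : ℂ) =
        (Λ k).eval (1 - z) +
          ∑ j ∈ Finset.range (k + 1), (Λ j).eval z / (Nat.factorial (2 * k - 2 * j) : ℂ) := by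
  intro k z
  set Q : ℂ[X] := C (((2*k).factorial : ℂ)⁻¹) * X^(2*k) - (Λ k).comp (1 - X) -
    ∑ j ∈ Finset.range (k+1), C (((2*k-2*j).factorial : ℂ)⁻¹) * Λ j with hQdef
  have key : ∀ i : ℕ, derivative^[2*i] Q =
      C (((2*k).factorial : ℂ)⁻¹) * ((Nat.descFactorial (2*k) (2*i) : ℂ[X]) * X ^ (2*k - 2*i)) -
      (derivative^[2*i] (Λ k)).comp (1 - X) -
      ∑ j ∈ Finset.range (k+1), C (((2*k-2*j).factorial : ℂ)⁻¹) * derivative^[2*i] (Λ j) := by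
    intro i
    rw [hQdef, Polynomial.iterate_derivative_sub, Polynomial.iterate_derivative_sub,
      Polynomial.iterate_derivative_C_mul, Polynomial.iterate_derivative_X_pow_eq_natCast_mul,
      Polynomial.iterate_derivative_comp_one_sub_X, Polynomial.iterate_derivative_sum]
    have : ((-1 : ℂ[X]) ^ (2*i)) = 1 := Even.neg_one_pow ⟨i, by ring⟩
    rw [this, one_mul]
    congr 1
    apply Finset.sum_congr rfl
    intro j _
    rw [Polynomial.iterate_derivative_C_mul]
  have hfac : ∀ i : ℕ, i ≤ k →
      ((2*k).factorial : ℂ)⁻¹ * (Nat.descFactorial (2*k) (2*i) : ℂ) =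
      ((2*k - 2*i).factorial : ℂ)⁻¹ := by
    intro i hi
    have h := Nat.factorial_mul_descFactorial (show 2*i ≤ 2*k by omega)
    have hcast : ((2*k - 2*i).factorial : ℂ) * (Nat.descFactorial (2*k) (2*i) : ℂ)
        = ((2*k).factorial : ℂ) := by exact_mod_cast congrArg (Nat.cast : ℕ → ℂ) h
    have h1 : ((2*k).factorial : ℂ) ≠ 0 := Nat.cast_ne_zero.mpr (Nat.factorial_ne_zero _)
    have h2 : ((2*k - 2*i).factorial : ℂ) ≠ 0 := Nat.cast_ne_zero.mpr (Nat.factorial_ne_zero _)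
    field_simp
    linear_combination hcast
  have hQ0 : Q = 0 := by
    apply lidstone_aux Q.natDegree Q le_rfl
    · intro i
      rw [key i]
      simp only [eval_sub, eval_mul, eval_C, eval_pow, eval_X, eval_comp, eval_sub, eval_one,
        eval_natCast, Polynomial.eval_finset_sum, sub_zero]
      rw [hΛ1 k i]
      rw [Finset.sum_eq_zero (fun j _ => by rw [hΛ0 j i, mul_zero])]
      rcases eq_or_ne i k with rfl | hik
      · have hne : ((2*i).factorial : ℂ) ≠ 0 := Nat.cast_ne_zero.mpr (Nat.factorial_ne_zero _)
        simp [Nat.descFactorial_self, inv_mul_cancel₀ hne]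
      · rw [if_neg hik]
        rcases lt_or_gt_of_ne hik with h | h
        · have : (0:ℂ) ^ (2*k - 2*i) = 0 := zero_pow (by omega)
          simp [this]
        · have : Nat.descFactorial (2*k) (2*i) = 0 :=
            Nat.descFactorial_of_lt (by omega)
          simp [this]
    · intro i
      rw [key i]
      simp only [eval_sub, eval_mul, eval_C, eval_pow, eval_X, eval_comp, eval_one,
        eval_natCast, Polynomial.eval_finset_sum, one_pow, mul_one, sub_self]
      rw [hΛ0 k i, sub_zero]
      have hsum : ∑ j ∈ Finset.range (k+1),
          (((2*k-2*j).factorial : ℂ)⁻¹ * ((derivative^[2*i] (Λ j)).eval 1)) =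
          if i ∈ Finset.range (k+1) then ((2*k-2*i).factorial : ℂ)⁻¹ else 0 := by
        rw [← Finset.sum_ite_eq (Finset.range (k+1)) i
          (fun j => ((2*k-2*j).factorial : ℂ)⁻¹)]
        apply Finset.sum_congr rfl
        intro j _
        rw [hΛ1 j i]
        by_cases h : i = j <;> simp [h]
      rw [hsum]
      by_cases hik : i ≤ k
      · rw [if_pos (Finset.mem_range.mpr (by omega)), hfac i hik, sub_eq_zero]
      · rw [if_neg (fun hm => hik (Nat.lt_succ_iff.mp (Finset.mem_range.mp hm))),
          Nat.descFactorial_of_lt (by omega)]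
        simp
  have := congrArg (Polynomial.eval z) hQ0
  rw [hQdef] at this
  simp only [eval_sub, eval_mul, eval_C, eval_pow, eval_X, eval_comp, eval_one,
    Polynomial.eval_finset_sum, eval_zero] at this
  have hrw : ∀ j ∈ Finset.range (k+1),
      (Λ j).eval z / ((2*k - 2*j).factorial : ℂ) =
      (((2*k-2*j).factorial : ℂ)⁻¹ * ((Λ j).eval z)) := by
    intro j _
    rw [div_eq_mul_inv, mul_comm]
  rw [Finset.sum_congr rfl hrw]
  rw [div_eq_mul_inv]
  linear_combination this
end

section
/- Let f: ℂ → ℂ be an entire function of exponential type < π. Suppose there exists an integer N such that the iterated derivatives satisfy f^{(2k)}(0) = 0 and f^{(2k)}(1) = 0 for every integer k ≥ N. Then f is a polynomial, i.e., there exists P ∈ ℂ[z] with f(z) = P(z) for all z ∈ ℂ. -/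
open Real Set Metric

namespace PW

lemma differentiable_iteratedDeriv {f : ℂ → ℂ} (hf : Differentiable ℂ f) (n : ℕ) :
    Differentiable ℂ (iteratedDeriv n f) := by
  induction n with
  | zero => simpa using hf
  | succ n ih =>
    rw [iteratedDeriv_succ]
    exact Complex.analyticOnNhd_univ_iff_differentiable.mp
      ((Complex.analyticOnNhd_univ_iff_differentiable.mpr ih).deriv)

lemma iteratedDeriv_add_eq {f : ℂ → ℂ} (m k : ℕ) :
    iteratedDeriv (m + k) f = iteratedDeriv m (iteratedDeriv k f) := by
  induction m with
  | zero => simp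
  | succ m ih => rw [Nat.succ_add, iteratedDeriv_succ, ih, iteratedDeriv_succ]

lemma iteratedDeriv_zero_fun (m : ℕ) : iteratedDeriv m (fun _ : ℂ => (0:ℂ)) = fun _ => 0 := by
  induction m with
  | zero => rfl
  | succ m ih => rw [iteratedDeriv_succ, ih]; funext x; simp

lemma deriv_bound {f : ℂ → ℂ} (hf : Differentiable ℂ f) {C τ : ℝ} (hτ : 0 ≤ τ) (hC : 0 ≤ C)
    (hb : ∀ z, ‖f z‖ ≤ C * Real.exp (τ * ‖z‖)) (z : ℂ) :
    ‖deriv f z‖ ≤ (C * Real.exp τ) * Real.exp (τ * ‖z‖) := by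
  have h := Complex.norm_deriv_le_of_forall_mem_sphere_norm_le (c := z) (R := 1)
    one_pos hf.diffContOnCl (C := C * Real.exp (τ * (‖z‖ + 1))) ?_
  · refine h.trans_eq ?_
    rw [div_one, mul_add, Real.exp_add]; ring
  · intro w hw
    refine (hb w).trans ?_
    have hw1 : ‖w‖ ≤ ‖z‖ + 1 := by
      have h1 : ‖w‖ - ‖z‖ ≤ ‖w - z‖ := norm_sub_norm_le w z
      have h2 : ‖w - z‖ = 1 := by
        rw [← dist_eq_norm]; exact mem_sphere_iff_norm.mp hw ▸ by
          simpa [dist_eq_norm] using mem_sphere_iff_norm.mp hw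
      linarith
    gcongr

lemma iteratedDeriv_bound {f : ℂ → ℂ} (hf : Differentiable ℂ f) {C τ : ℝ} (hτ : 0 ≤ τ)
    (hC : 0 ≤ C) (hb : ∀ z, ‖f z‖ ≤ C * Real.exp (τ * ‖z‖)) (n : ℕ) (z : ℂ) :
    ‖iteratedDeriv n f z‖ ≤ (C * Real.exp (n * τ)) * Real.exp (τ * ‖z‖) := by
  induction n generalizing z with
  | zero => simpa using hb z
  | succ n ih =>
    rw [iteratedDeriv_succ]
    have := deriv_bound (differentiable_iteratedDeriv hf n) hτ (by positivity) ih z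
    refine this.trans_eq ?_
    push_cast
    rw [show ((n:ℝ)+1)*τ = (n:ℝ)*τ + τ by ring, Real.exp_add]
    ring

lemma differentiable_dslope {f : ℂ → ℂ} (hf : Differentiable ℂ f) (c : ℂ) :
    Differentiable ℂ (dslope f c) := by
  rw [← differentiableOn_univ]
  exact (Complex.differentiableOn_dslope (Filter.univ_mem)).mpr hf.differentiableOn

lemma hasDerivAt_sinpi (z : ℂ) :
    HasDerivAt (fun w : ℂ => Complex.sin (↑Real.pi * w)) (↑Real.pi * Complex.cos (↑Real.pi * z)) z := by
  have h := (Complex.hasDerivAt_sin ((Real.pi : ℂ) * z)).comp z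
    ((hasDerivAt_id z).const_mul (Real.pi : ℂ))
  have h2 : HasDerivAt (fun w : ℂ => Complex.sin (↑Real.pi * w))
      (Complex.cos (↑Real.pi * z) * (↑Real.pi * 1)) z := h
  convert h2 using 1
  ring

lemma cos_int_ne_zero (n : ℤ) : Complex.cos (↑Real.pi * n) ≠ 0 := by
  intro h
  have hs : Complex.sin (↑Real.pi * n) = 0 := Complex.sin_eq_zero_iff.mpr ⟨n, by ring⟩
  have h2 := Complex.sin_sq_add_cos_sq ((Real.pi : ℂ) * n)
  rw [hs, h] at h2
  simp at h2

lemma norm_sin_ge (w : ℂ) :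
    (Real.exp |w.im| - Real.exp (-|w.im|)) / 2 ≤ ‖Complex.sin w‖ := by
  have hdef : Complex.sin w = (Complex.exp (-w * Complex.I) - Complex.exp (w * Complex.I)) * Complex.I / 2 := rfl
  have h1 : ‖Complex.exp (-w * Complex.I)‖ = Real.exp w.im := by
    rw [Complex.norm_exp]; congr 1; simp [Complex.mul_I_re]
  have h2 : ‖Complex.exp (w * Complex.I)‖ = Real.exp (-w.im) := by
    rw [Complex.norm_exp]; congr 1; simp [Complex.mul_I_re]
  have hnorm : ‖Complex.sin w‖ =
      ‖Complex.exp (-w * Complex.I) - Complex.exp (w * Complex.I)‖ / 2 := by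
    rw [hdef]; rw [norm_div, norm_mul, Complex.norm_I, mul_one]; norm_num
  rw [hnorm]
  rcases le_or_gt 0 w.im with hy | hy
  · rw [abs_of_nonneg hy]
    have h3 := norm_sub_norm_le (Complex.exp (-w * Complex.I)) (Complex.exp (w * Complex.I))
    rw [h1, h2] at h3
    linarith
  · rw [abs_of_neg hy, neg_neg]
    have h3 := norm_sub_norm_le (Complex.exp (w * Complex.I)) (Complex.exp (-w * Complex.I))
    rw [h1, h2, norm_sub_rev] at h3
    linarith


lemma sin_pi_int (n : ℤ) : Complex.sin (↑Real.pi * n) = 0 :=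
  Complex.sin_eq_zero_iff.mpr ⟨n, by ring⟩

lemma sin_pi_ne_zero {z : ℂ} (hz : ¬ ∃ n : ℤ, (n:ℂ) = z) : Complex.sin (↑Real.pi * z) ≠ 0 := by
  intro h
  obtain ⟨k, hk⟩ := Complex.sin_eq_zero_iff.mp h
  refine hz ⟨k, ?_⟩
  have hπ : (Real.pi : ℂ) ≠ 0 := by
    simpa using Real.pi_ne_zero
  have h2 : (Real.pi:ℂ) * z = (Real.pi:ℂ) * k := by rw [hk]; ring
  exact (mul_left_cancel₀ hπ h2).symm

lemma dense_im_ne : Dense {z : ℂ | z.im ≠ 0} := by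
  rw [Metric.dense_iff]
  intro x r hr
  by_cases hx : x.im ≠ 0
  · exact ⟨x, mem_ball_self hr, hx⟩
  · push_neg at hx
    refine ⟨x + (↑(r/2)) * Complex.I, ?_, ?_⟩
    · rw [mem_ball, dist_eq_norm]
      have he : x + (↑(r/2)) * Complex.I - x = (↑(r/2):ℂ) * Complex.I := by ring
      rw [he, norm_mul, Complex.norm_I, mul_one, Complex.norm_real]
      rw [Real.norm_eq_abs, abs_of_pos (by linarith)]
      linarith
    · simp only [Set.mem_setOf_eq, Complex.add_im, Complex.mul_im, Complex.I_re, Complex.I_im,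
        Complex.ofReal_re, Complex.ofReal_im, hx]
      simp
      linarith

set_option maxHeartbeats 2000000 in
lemma key (g : ℂ → ℂ) (hg : Differentiable ℂ g) {τ C₁ : ℝ} (hτ0 : 0 ≤ τ) (hτ : τ < Real.pi)
    (hC₁ : 0 < C₁) (hgb : ∀ z, ‖g z‖ ≤ C₁ * Real.exp (τ * ‖z‖))
    (h0 : ∀ k : ℕ, iteratedDeriv (2 * k) g 0 = 0)
    (h1 : ∀ k : ℕ, iteratedDeriv (2 * k) g 1 = 0) :
    ∀ z, g z = 0 := by
  classical
  -- antisymmetry about 0 and 1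
  have hanti : ∀ c : ℂ, (∀ k : ℕ, iteratedDeriv (2 * k) g c = 0) →
      ∀ z : ℂ, g (c + z) + g (c - z) = 0 := by
    intro c hc z
    have ha := Complex.hasSum_taylorSeries_of_entire hg c (c + z)
    have hb := Complex.hasSum_taylorSeries_of_entire hg c (c - z)
    have e1 : (c + z - c : ℂ) = z := by ring
    have e2 : (c - z - c : ℂ) = -z := by ring
    rw [e1] at ha; rw [e2] at hb
    have hsum := ha.add hb
    have hzero : (fun n : ℕ => (n.factorial : ℂ)⁻¹ • z ^ n • iteratedDeriv n g c
        + (n.factorial : ℂ)⁻¹ • (-z) ^ n • iteratedDeriv n g c) = fun _ => (0:ℂ) := by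
      funext n
      rcases Nat.even_or_odd n with he | ho
      · obtain ⟨k, hk⟩ := he
        have hd : iteratedDeriv n g c = 0 := by
          rw [hk, ← two_mul]; exact hc k
        simp [hd]
      · rw [ho.neg_pow]
        simp [smul_smul]
    rw [hzero] at hsum
    exact hsum.unique hasSum_zero
  have hodd : ∀ z : ℂ, g z + g (-z) = 0 := by
    intro z
    have := hanti 0 h0 z
    simpa using this
  have hsym : ∀ z : ℂ, g (1 + z) + g (1 - z) = 0 := hanti 1 h1
  have hper : ∀ z : ℂ, g (z + 2) = g z := by
    intro z
    have a := hsym (1 + z)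
    have e1 : (1 + (1 + z) : ℂ) = z + 2 := by ring
    have e2 : (1 - (1 + z) : ℂ) = -z := by ring
    rw [e1, e2] at a
    have b := hodd z
    linear_combination a - b
  have g0 : g 0 = 0 := by
    have := hodd 0
    rw [neg_zero] at this
    exact add_self_eq_zero.mp this
  have g1 : g 1 = 0 := by
    have := hsym 0
    rw [add_zero, sub_zero] at this
    exact add_self_eq_zero.mp this
  have hPer : Function.Periodic g 2 := hper
  have gInt : ∀ n : ℤ, g n = 0 := by
    intro n
    rcases Int.even_or_odd n with ⟨m, hm⟩ | ⟨m, hm⟩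
    · have h := hPer.sub_zsmul_eq (x := (n:ℂ)) m
      have e : (n:ℂ) - m • (2:ℂ) = 0 := by
        rw [zsmul_eq_mul, hm]; push_cast; ring
      rw [e] at h
      rw [← h, g0]
    · have h := hPer.sub_zsmul_eq (x := (n:ℂ)) m
      have e : (n:ℂ) - m • (2:ℂ) = 1 := by
        rw [zsmul_eq_mul, hm]; push_cast; ring
      rw [e] at h
      rw [← h, g1]
  -- the quotient function
  set s : ℂ → ℂ := fun w => Complex.sin (↑Real.pi * w) with hs_def
  have hs_diff : Differentiable ℂ s := fun z => (hasDerivAt_sinpi z).differentiableAt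
  set h : ℂ → ℂ := fun z =>
    if ∃ n : ℤ, (n:ℂ) = z then deriv g z / (↑Real.pi * Complex.cos (↑Real.pi * z))
    else g z / Complex.sin (↑Real.pi * z) with hh_def
  have hval : ∀ z : ℂ, (¬ ∃ n : ℤ, (n:ℂ) = z) → h z = g z / Complex.sin (↑Real.pi * z) := by
    intro z hz
    rw [hh_def]
    simp only [if_neg hz]
  have hint_ball : ∀ (n : ℤ) (z : ℂ), z ∈ ball (n:ℂ) 1 → z ≠ (n:ℂ) →
      ¬ ∃ m : ℤ, (m:ℂ) = z := by
    intro n z hz hzn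
    rintro ⟨m, rfl⟩
    have hd : dist ((m:ℂ)) ((n:ℂ)) < 1 := mem_ball.mp hz
    have hmn : m ≠ n := fun e => hzn (by rw [e])
    have h1 : (1:ℤ) ≤ |m - n| := Int.one_le_abs (sub_ne_zero.mpr hmn)
    have h2 : (1:ℝ) ≤ dist ((m:ℂ)) ((n:ℂ)) := by
      rw [dist_eq_norm]
      have e : ((m:ℂ) - n) = (((m - n : ℤ) : ℝ) : ℂ) := by push_cast; ring
      rw [e, Complex.norm_real, Real.norm_eq_abs]
      exact_mod_cast h1
    linarith
  have hdiff : Differentiable ℂ h := by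
    intro z₀
    by_cases hz : ∃ n : ℤ, (n:ℂ) = z₀
    · obtain ⟨n, rfl⟩ := hz
      have hds : deriv s (n:ℂ) = ↑Real.pi * Complex.cos (↑Real.pi * n) := (hasDerivAt_sinpi _).deriv
      have hden : dslope s (n:ℂ) (n:ℂ) ≠ 0 := by
        rw [dslope_same, hds]
        exact mul_ne_zero (by simpa using Real.pi_ne_zero) (cos_int_ne_zero n)
      have hF : DifferentiableAt ℂ (fun z => dslope g (n:ℂ) z / dslope s (n:ℂ) z) (n:ℂ) :=
        ((differentiable_dslope hg _) _).div ((differentiable_dslope hs_diff _) _) hden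
      refine hF.congr_of_eventuallyEq ?_
      filter_upwards [ball_mem_nhds ((n:ℂ)) one_pos] with z hzball
      by_cases hzn : z = (n:ℂ)
      · subst hzn
        have ht : ∃ m : ℤ, (m:ℂ) = (n:ℂ) := ⟨n, rfl⟩
        rw [hh_def]
        simp only [if_pos ht]
        rw [dslope_same, dslope_same, hds]
      · have hnotint := hint_ball n z hzball hzn
        have hzn' : z - (n:ℂ) ≠ 0 := sub_ne_zero.mpr hzn
        have hsz : Complex.sin (↑Real.pi * z) ≠ 0 := sin_pi_ne_zero hnotint
        rw [hval z hnotint, dslope_of_ne g hzn, dslope_of_ne s hzn,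
          slope_def_field, slope_def_field, gInt n]
        have hsn : s (n:ℂ) = 0 := sin_pi_int n
        rw [hsn, sub_zero, sub_zero]
        rw [div_div_div_cancel_right₀]
        exact hzn'
    · have hs0 : Complex.sin (↑Real.pi * z₀) ≠ 0 := sin_pi_ne_zero hz
      have hopen : IsOpen {z : ℂ | Complex.sin (↑Real.pi * z) ≠ 0} := by
        have hc : Continuous fun z : ℂ => Complex.sin (↑Real.pi * z) :=
          Complex.continuous_sin.comp (continuous_const.mul continuous_id)
        exact IsOpen.preimage hc isOpen_ne
      have hq : DifferentiableAt ℂ (fun z => g z / Complex.sin (↑Real.pi * z)) z₀ :=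
        (hg z₀).div (hs_diff z₀) hs0
      refine hq.congr_of_eventuallyEq ?_
      filter_upwards [hopen.mem_nhds hs0] with z hzU
      have hnotint : ¬ ∃ m : ℤ, (m:ℂ) = z := by
        rintro ⟨m, rfl⟩; exact hzU (sin_pi_int m)
      exact hval z hnotint
  have hcont : Continuous h := hdiff.continuous
  have hmul : ∀ z : ℂ, g z = h z * Complex.sin (↑Real.pi * z) := by
    intro z
    by_cases hz : ∃ n : ℤ, (n:ℂ) = z
    · obtain ⟨n, rfl⟩ := hz
      rw [gInt n, sin_pi_int n, mul_zero]
    · rw [hval z hz, div_mul_cancel₀]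
      exact sin_pi_ne_zero hz
  have hperh : ∀ z : ℂ, h (z + 2) = h z := by
    have hEq : (fun z => h (z + 2)) = h := by
      apply Continuous.ext_on dense_im_ne (hcont.comp (continuous_id.add continuous_const)) hcont
      intro z hz
      have hzint : ¬ ∃ n : ℤ, (n:ℂ) = z := by
        rintro ⟨n, rfl⟩
        exact hz (by simp)
      have hz2 : ¬ ∃ n : ℤ, (n:ℂ) = z + 2 := by
        rintro ⟨n, he⟩
        apply hz
        have h3 := congrArg Complex.im he
        simpa using h3.symm
      show h (z + 2) = h z
      rw [hval _ hz2, hval _ hzint, hper z]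
      congr 1
      rw [show (↑Real.pi : ℂ) * (z + 2) = ↑Real.pi * z + 2 * ↑Real.pi by ring]
      rw [Complex.sin_add_two_pi]
    intro z
    exact congrFun hEq z
  -- bound on the strip
  set M₂ : ℝ := 4 * C₁ * Real.exp (2 * τ) with hM₂
  have hM₂pos : 0 < M₂ := by positivity
  have hstrip : ∀ z : ℂ, z.re ∈ Icc (0:ℝ) 2 → 1 ≤ |z.im| →
      ‖h z‖ ≤ M₂ * Real.exp ((τ - Real.pi) * |z.im|) := by
    intro z hre him
    have hzint : ¬ ∃ n : ℤ, (n:ℂ) = z := by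
      rintro ⟨n, rfl⟩
      rw [Complex.intCast_im, abs_zero] at him
      linarith
    have hs0 := sin_pi_ne_zero hzint
    rw [hval z hzint, norm_div]
    have him0 : ((↑Real.pi : ℂ) * z).im = Real.pi * z.im := by
      simp [Complex.mul_im]
    have habs : |((↑Real.pi:ℂ) * z).im| = Real.pi * |z.im| := by
      rw [him0, abs_mul, abs_of_pos Real.pi_pos]
    have hden : Real.exp (Real.pi * |z.im|) / 4 ≤ ‖Complex.sin ((↑Real.pi:ℂ) * z)‖ := by
      have hl := norm_sin_ge ((↑Real.pi:ℂ) * z)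
      rw [habs] at hl
      have hx : (1:ℝ) ≤ Real.pi * |z.im| := by nlinarith [Real.pi_gt_three]
      have ha := Real.add_one_le_exp (Real.pi * |z.im|)
      rw [Real.exp_neg] at hl
      set A := Real.exp (Real.pi * |z.im|) with hA_def
      have hA : 2 ≤ A := by linarith
      have hApos : (0:ℝ) < A := by linarith
      have hinv : A * A⁻¹ = 1 := mul_inv_cancel₀ (ne_of_gt hApos)
      have hstep : A / 4 ≤ (A - A⁻¹) / 2 := by
        nlinarith [inv_nonneg.mpr hApos.le]
      linarith
    have hnum : ‖g z‖ ≤ C₁ * Real.exp (τ * (2 + |z.im|)) := by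
      refine (hgb z).trans ?_
      have h1 : ‖z‖ ≤ 2 + |z.im| := by
        have h2 := Complex.norm_le_abs_re_add_abs_im z
        have hre' : |z.re| ≤ 2 := abs_le.mpr ⟨by linarith [hre.1], hre.2⟩
        linarith
      gcongr
    have hexp0 : (0:ℝ) < Real.exp (Real.pi * |z.im|) / 4 := by positivity
    calc ‖g z‖ / ‖Complex.sin (↑Real.pi * z)‖
        ≤ (C₁ * Real.exp (τ * (2 + |z.im|))) / (Real.exp (Real.pi * |z.im|) / 4) :=
          div_le_div₀ (by positivity) hnum hexp0 hden
      _ = M₂ * Real.exp ((τ - Real.pi) * |z.im|) := by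
          rw [hM₂, show τ * (2 + |z.im|) =
            2*τ + ((τ - Real.pi) * |z.im| + Real.pi * |z.im|) by ring,
            Real.exp_add, Real.exp_add]
          have hE : Real.exp (Real.pi * |z.im|) ≠ 0 := (Real.exp_pos _).ne'
          field_simp
  -- bound on the compact part of the strip
  have hKc : IsCompact {z : ℂ | z.re ∈ Icc (0:ℝ) 2 ∧ z.im ∈ Icc (-1:ℝ) 1} := by
    apply Metric.isCompact_of_isClosed_isBounded
    · exact (isClosed_Icc.preimage Complex.continuous_re).inter
        (isClosed_Icc.preimage Complex.continuous_im)
    · apply (Metric.isBounded_closedBall (x := (0:ℂ)) (r := 3)).subset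
      intro z hz
      rw [mem_closedBall, dist_eq_norm, sub_zero]
      have h2 := Complex.norm_le_abs_re_add_abs_im z
      have h3 : |z.re| ≤ 2 := abs_le.mpr ⟨by linarith [hz.1.1], hz.1.2⟩
      have h4 : |z.im| ≤ 1 := abs_le.mpr ⟨hz.2.1, hz.2.2⟩
      linarith
  obtain ⟨M₁, hM₁⟩ := hKc.exists_bound_of_continuousOn hcont.continuousOn
  set M : ℝ := max M₁ M₂ with hM
  have hstrip' : ∀ z : ℂ, z.re ∈ Icc (0:ℝ) 2 → ‖h z‖ ≤ M := by
    intro z hre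
    rcases le_or_gt |z.im| 1 with him | him
    · exact (hM₁ z ⟨hre, abs_le.mp him⟩).trans (le_max_left _ _)
    · refine (hstrip z hre him.le).trans (le_trans ?_ (le_max_right M₁ M₂))
      have he : Real.exp ((τ - Real.pi) * |z.im|) ≤ 1 := by
        rw [Real.exp_le_one_iff]
        apply mul_nonpos_of_nonpos_of_nonneg
        · linarith
        · exact abs_nonneg _
      nlinarith
  have hbound : ∀ z : ℂ, ‖h z‖ ≤ M := by
    intro z
    have hp : Function.Periodic h 2 := hperh
    have hz2 := hp.sub_zsmul_eq (x := z) ⌊z.re / 2⌋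
    rw [← hz2]
    apply hstrip'
    have hfl := Int.floor_le (z.re / 2)
    have hfl2 := Int.lt_floor_add_one (z.re / 2)
    have hre' : (z - (⌊z.re/2⌋ : ℤ) • (2:ℂ)).re = z.re - 2 * (⌊z.re/2⌋ : ℝ) := by
      rw [zsmul_eq_mul]
      simp [Complex.sub_re, Complex.mul_re]
      ring
    rw [hre']
    constructor
    · linarith
    · linarith
  -- Liouville
  have hb : Bornology.IsBounded (Set.range h) := by
    rw [isBounded_iff_forall_norm_le]
    exact ⟨M, by rintro x ⟨z, rfl⟩; exact hbound z⟩
  have hconst : ∀ z, h z = h 0 := fun z => hdiff.apply_eq_apply_of_bounded hb z 0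
  have hM2lim : Filter.Tendsto (fun t : ℝ => M₂ * Real.exp ((τ - Real.pi) * t))
      Filter.atTop (nhds 0) := by
    rw [show (0:ℝ) = M₂ * 0 by ring]
    apply Filter.Tendsto.const_mul
    apply Real.tendsto_exp_atBot.comp
    have h1 : Filter.Tendsto (fun t : ℝ => (Real.pi - τ) * t) Filter.atTop Filter.atTop :=
      (Filter.tendsto_const_mul_atTop_of_pos (by linarith)).mpr Filter.tendsto_id
    have h2 := Filter.tendsto_neg_atBot_iff.mpr h1
    convert h2 using 2 with t
    ring
  have hle : ∀ t : ℝ, 1 ≤ t → ‖h 0‖ ≤ M₂ * Real.exp ((τ - Real.pi) * t) := by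
    intro t ht
    have hre : ((t:ℂ) * Complex.I).re ∈ Icc (0:ℝ) 2 := by
      simp [Complex.mul_re]
    have himeq : ((t:ℂ) * Complex.I).im = t := by
      simp [Complex.mul_im]
    have hz := hstrip ((t:ℂ) * Complex.I) hre (by rw [himeq, abs_of_pos (by linarith)]; exact ht)
    rw [hconst ((t:ℂ) * Complex.I)] at hz
    rw [himeq, abs_of_pos (by linarith : (0:ℝ) < t)] at hz
    exact hz
  have hnorm0 : ‖h 0‖ ≤ 0 := by
    refine ge_of_tendsto hM2lim ?_
    rw [Filter.eventually_atTop]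
    exact ⟨1, hle⟩
  have h00 : h 0 = 0 := norm_le_zero_iff.mp hnorm0
  intro z
  rw [hmul z, hconst z, h00, zero_mul]


end PW

open PW in
/-- **Theorem (Poritsky, Whittaker 1932; unicity).** Let `f` be an entire function of
exponential type `< π` such that `f^{(2k)}(0) = f^{(2k)}(1) = 0` for all sufficiently
large `k`. Then `f` is a polynomial. -/
theorem poritsky_whittaker_unicity (f : ℂ → ℂ)
    (hf : Differentiable ℂ f)
    (htype : ∃ τ C : ℝ, τ < π ∧ 0 < C ∧ ∀ z : ℂ, ‖f z‖ ≤ C * Real.exp (τ * ‖z‖))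
    (hvanish : ∃ N : ℕ, ∀ k : ℕ, N ≤ k →
      iteratedDeriv (2 * k) f 0 = 0 ∧ iteratedDeriv (2 * k) f 1 = 0) :
    ∃ P : Polynomial ℂ, ∀ z : ℂ, f z = P.eval z := by
  obtain ⟨τ₀, C, hτπ, hC, hb⟩ := htype
  obtain ⟨N, hN⟩ := hvanish
  set τ : ℝ := max τ₀ 0 with hτdef
  have hτ0 : 0 ≤ τ := le_max_right _ _
  have hτ : τ < Real.pi := max_lt hτπ Real.pi_pos
  have hb' : ∀ z, ‖f z‖ ≤ C * Real.exp (τ * ‖z‖) := by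
    intro z
    refine (hb z).trans ?_
    gcongr
    exact le_max_left _ _
  set g : ℂ → ℂ := iteratedDeriv (2*N) f with hgdef
  have hgd : Differentiable ℂ g := differentiable_iteratedDeriv hf (2*N)
  have hgb : ∀ z, ‖g z‖ ≤ (C * Real.exp ((2*N : ℕ) * τ)) * Real.exp (τ * ‖z‖) :=
    fun z => iteratedDeriv_bound hf hτ0 hC.le hb' (2*N) z
  have hC₁ : 0 < C * Real.exp ((2*N : ℕ) * τ) := by positivity
  have hcomp : ∀ k : ℕ, iteratedDeriv (2*k) g = iteratedDeriv (2*(k+N)) f := by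
    intro k
    rw [hgdef, ← iteratedDeriv_add_eq]
    congr 1
    ring
  have h0 : ∀ k : ℕ, iteratedDeriv (2*k) g 0 = 0 := by
    intro k
    rw [hcomp k]
    exact (hN (k+N) (Nat.le_add_left N k)).1
  have h1 : ∀ k : ℕ, iteratedDeriv (2*k) g 1 = 0 := by
    intro k
    rw [hcomp k]
    exact (hN (k+N) (Nat.le_add_left N k)).2
  have hz := key g hgd hτ0 hτ hC₁ hgb h0 h1
  have hg0 : g = fun _ => (0:ℂ) := funext hz
  have hzero : ∀ n : ℕ, 2*N ≤ n → iteratedDeriv n f 0 = 0 := by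
    intro n hn
    have he : iteratedDeriv n f = iteratedDeriv (n - 2*N) g := by
      rw [hgdef, ← iteratedDeriv_add_eq, Nat.sub_add_cancel hn]
    rw [he, hg0, iteratedDeriv_zero_fun]
  refine ⟨∑ n ∈ Finset.range (2*N),
    Polynomial.C ((n.factorial : ℂ)⁻¹ * iteratedDeriv n f 0) * Polynomial.X ^ n, ?_⟩
  intro z
  rw [← Complex.taylorSeries_eq_of_entire' (c := 0) (z := z) hf]
  rw [tsum_eq_sum (s := Finset.range (2*N)) ?_]
  · rw [Polynomial.eval_finset_sum]
    refine Finset.sum_congr rfl ?_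
    intro n _
    simp [sub_zero]
  · intro n hn
    rw [Finset.mem_range, not_lt] at hn
    rw [hzero n hn]
    ring
end

section
/- Let E be an infinite subset of 2ℕ × {0,1}, where 2ℕ denotes the set of even nonnegative integers. Then there exists an uncountable set S of entire functions f: ℂ → ℂ such that each f ∈ S is of order 0 (i.e., for every ε > 0 there exists C > 0 with |f(z)| ≤ C·exp(|z|^ε) for all z ∈ ℂ), is not a polynomial, has all Taylor coefficients at the origin rational, and satisfies f^{(t)}(i) = 0 for every pair (t,i) ∈ (2ℕ × {0,1}) \ E. -/
open Polynomial Filter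

namespace UMC

lemma exists_ker_ne_zero {M : Type*} [AddCommGroup M] [Module ℚ M] [FiniteDimensional ℚ M]
    {n : ℕ} (L : (Fin n → ℚ) →ₗ[ℚ] M) (h : Module.finrank ℚ M < n) :
    ∃ x : Fin n → ℚ, x ≠ 0 ∧ L x = 0 := by
  by_contra h'
  push_neg at h'
  have hinj : Function.Injective L := by
    intro x y hxy
    have : L (x - y) = 0 := by rw [map_sub, hxy, sub_self]
    by_contra hne
    exact (h' (x - y) (sub_ne_zero.mpr hne)) this
  have := LinearMap.finrank_le_finrank_of_injective hinj
  rw [Module.finrank_fintype_fun_eq_card, Fintype.card_fin] at this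
  omega

lemma card_evens (N : ℕ) :
    (Finset.filter (fun s => Even s) (Finset.range (2*N+2))).card = N+1 := by
  have himg : Finset.filter (fun s => Even s) (Finset.range (2*N+2))
      = Finset.image (fun j => 2*j) (Finset.range (N+1)) := by
    ext s
    simp only [Finset.mem_filter, Finset.mem_range, Finset.mem_image]
    constructor
    · rintro ⟨hs, r, rfl⟩
      exact ⟨r, by omega, by omega⟩
    · rintro ⟨j, hj, rfl⟩
      exact ⟨by omega, ⟨j, by omega⟩⟩
  rw [himg, Finset.card_image_of_injective _ (fun a b hab => by omega), Finset.card_range]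

/-- Key existence lemma: a nonzero odd rational polynomial whose Taylor coefficients at `1`
are supported (in even degrees) on `T`, and which has prescribed vanishing of low-order
coefficients both at `0` and at `1`. -/
lemma lemB (T : Set ℕ) (hT : T.Infinite) (hTe : ∀ t ∈ T, Even t) (v : ℕ) :
    ∃ P : ℚ[X], P ≠ 0 ∧ (∀ n, Even n → P.coeff n = 0) ∧
      (∀ s, Even s → s ∉ T → (Polynomial.taylor 1 P).coeff s = 0) ∧
      (∀ m, m < v → P.coeff m = 0) ∧
      (∀ m, m < v → (Polynomial.taylor 1 P).coeff m = 0) := by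
  classical
  obtain ⟨Sf, hSsub, hScard⟩ := hT.exists_subset_card_eq (2*v+1)
  set N := Sf.sup id with hN
  have hSle : ∀ s ∈ Sf, s ≤ N := fun s hs => Finset.le_sup (f := id) hs
  set evens : Finset ℕ := Finset.filter (fun s => Even s) (Finset.range (2*N+2)) with hevens
  set bad : Finset ℕ := Finset.filter (fun s => Even s ∧ s ∉ T) (Finset.range (2*N+2)) with hbad
  have hSsub' : Sf ⊆ evens := by
    intro s hs
    have hsT : s ∈ T := hSsub hs
    simp only [hevens, Finset.mem_filter, Finset.mem_range]
    exact ⟨by have := hSle s hs; omega, hTe s hsT⟩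
  have hbadsub : bad ⊆ evens \ Sf := by
    intro s hs
    simp only [hbad, Finset.mem_filter, Finset.mem_range] at hs
    simp only [Finset.mem_sdiff, hevens, Finset.mem_filter, Finset.mem_range]
    exact ⟨⟨hs.1, hs.2.1⟩, fun hsS => hs.2.2 (hSsub hsS)⟩
  have hbadcard : bad.card + (2*v+1) ≤ N+1 := by
    have h1 : bad.card ≤ (evens \ Sf).card := Finset.card_le_card hbadsub
    have h2 : (evens \ Sf).card = evens.card - Sf.card := Finset.card_sdiff_of_subset hSsub'
    have h3 : Sf.card ≤ evens.card := Finset.card_le_card hSsub'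
    have h4 : evens.card = N+1 := card_evens N
    omega
  -- the polynomial-building linear map
  let pol : (Fin (N+1) → ℚ) →ₗ[ℚ] ℚ[X] :=
    { toFun := fun x => ∑ j : Fin (N+1), Polynomial.C (x j) * X ^ (2*(j:ℕ)+1)
      map_add' := by
        intro x y
        rw [← Finset.sum_add_distrib]
        refine Finset.sum_congr rfl fun j _ => ?_
        rw [Pi.add_apply, map_add, add_mul]
      map_smul' := by
        intro a x
        simp only [RingHom.id_apply, Finset.smul_sum]
        refine Finset.sum_congr rfl fun j _ => ?_
        rw [Pi.smul_apply, smul_eq_mul, map_mul, Polynomial.smul_eq_C_mul, mul_assoc] }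
  let L : (Fin (N+1) → ℚ) →ₗ[ℚ]
      ({s // s ∈ bad} → ℚ) × ((Fin v → ℚ) × (Fin v → ℚ)) :=
    (LinearMap.pi fun s : {s // s ∈ bad} =>
        (Polynomial.lcoeff ℚ (s : ℕ)) ∘ₗ (Polynomial.taylor (1:ℚ)) ∘ₗ pol).prod
      ((LinearMap.pi fun m : Fin v => (Polynomial.lcoeff ℚ (m : ℕ)) ∘ₗ pol).prod
        (LinearMap.pi fun m : Fin v =>
          (Polynomial.lcoeff ℚ (m : ℕ)) ∘ₗ (Polynomial.taylor (1:ℚ)) ∘ₗ pol))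
  obtain ⟨x, hx0, hLx⟩ : ∃ x : Fin (N+1) → ℚ, x ≠ 0 ∧ L x = 0 := by
    apply exists_ker_ne_zero
    simp only [Module.finrank_prod, Module.finrank_fintype_fun_eq_card,
      Fintype.card_coe, Fintype.card_fin]
    omega
  set P : ℚ[X] := pol x with hP
  have hPc : ∀ n, P.coeff n = ∑ j : Fin (N+1), if n = 2*(j:ℕ)+1 then x j else 0 := by
    intro n
    rw [hP]
    show (∑ j : Fin (N+1), Polynomial.C (x j) * X ^ (2*(j:ℕ)+1)).coeff n = _
    rw [Polynomial.finset_sum_coeff]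
    refine Finset.sum_congr rfl fun j _ => ?_
    rw [Polynomial.coeff_C_mul, Polynomial.coeff_X_pow, mul_ite, mul_one, mul_zero]
  have hPodd : ∀ n, Even n → P.coeff n = 0 := by
    intro n hn
    rw [hPc]
    refine Finset.sum_eq_zero fun j _ => ?_
    have : ¬(n = 2*(j:ℕ)+1) := by
      rcases hn with ⟨r, rfl⟩; omega
    simp [this]
  have hPcoeffj : ∀ j : Fin (N+1), P.coeff (2*(j:ℕ)+1) = x j := by
    intro j
    rw [hPc]
    rw [Finset.sum_eq_single j]
    · simp
    · intro b _ hbj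
      have : ¬(2*(j:ℕ)+1 = 2*(b:ℕ)+1) := by
        intro hh
        exact hbj (Fin.ext (by omega))
      rw [if_neg this]
    · intro hj; exact absurd (Finset.mem_univ j) hj
  have hPne : P ≠ 0 := by
    intro hP0
    apply hx0
    funext j
    have := hPcoeffj j
    rw [hP0] at this
    simpa using this.symm
  have hPdeg : P.natDegree ≤ 2*N+1 := by
    rw [hP]
    show (∑ j : Fin (N+1), Polynomial.C (x j) * X ^ (2*(j:ℕ)+1)).natDegree ≤ 2*N+1
    refine Polynomial.natDegree_sum_le_of_forall_le _ _ fun j _ => ?_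
    refine le_trans (Polynomial.natDegree_C_mul_X_pow_le _ _) ?_
    have := j.2; omega
  have hL1 : ∀ s : {s // s ∈ bad}, (Polynomial.taylor 1 P).coeff (s : ℕ) = 0 :=
    fun s => congrFun (congrArg Prod.fst hLx) s
  have hL2 : ∀ m : Fin v, P.coeff (m : ℕ) = 0 :=
    fun m => congrFun (congrArg (fun y => y.2.1) hLx) m
  have hL3 : ∀ m : Fin v, (Polynomial.taylor 1 P).coeff (m : ℕ) = 0 :=
    fun m => congrFun (congrArg (fun y => y.2.2) hLx) m
  refine ⟨P, hPne, hPodd, ?_, ?_, ?_⟩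
  · intro s hs hsT
    by_cases hsN : s < 2*N+2
    · exact hL1 ⟨s, by simp [hbad, Finset.mem_filter, Finset.mem_range]; exact ⟨hsN, hs, hsT⟩⟩
    · apply Polynomial.coeff_eq_zero_of_natDegree_lt
      rw [Polynomial.natDegree_taylor]
      omega
  · intro m hm; exact hL2 ⟨m, hm⟩
  · intro m hm; exact hL3 ⟨m, hm⟩

lemma iter_deriv_eval {R : Type*} [CommSemiring R] (P : R[X]) (t : ℕ) (a : R) :
    (Polynomial.derivative^[t] P).eval a = (t.factorial : R) * (Polynomial.taylor a P).coeff t := by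
  rw [Polynomial.taylor_coeff]
  have h := Polynomial.factorial_smul_hasseDeriv (R := R) t
  have h2 : Polynomial.derivative^[t] P = (t.factorial : R[X]) * Polynomial.hasseDeriv t P := by
    conv_lhs => rw [← h]
    simp [nsmul_eq_mul]
  rw [h2, Polynomial.eval_mul, Polynomial.eval_natCast]

lemma coeff_comp_neg {R : Type*} [CommRing R] (P : R[X]) (n : ℕ) :
    (P.comp (-X)).coeff n = (-1)^n * P.coeff n := by
  induction P using Polynomial.induction_on' with
  | add p q hp hq => simp [Polynomial.add_comp, hp, hq, mul_add]
  | monomial m a =>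
      rw [Polynomial.monomial_comp, neg_pow]
      rw [show Polynomial.C a * ((-1)^m * X^m) = ((-1):R[X])^m * (Polynomial.C a * X^m) by ring]
      rw [show ((-1):R[X])^m = Polynomial.C ((-1)^m) by simp [map_pow]]
      rw [Polynomial.coeff_C_mul, Polynomial.coeff_C_mul, Polynomial.coeff_X_pow,
        Polynomial.coeff_monomial]
      by_cases h : n = m
      · subst h; simp
      · simp [h, Ne.symm h]

lemma polyIterDeriv (p : ℂ[X]) (n : ℕ) :
    iteratedDeriv n (fun z => p.eval z) = fun z => (Polynomial.derivative^[n] p).eval z := by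
  induction n generalizing p with
  | zero => simp
  | succ n ih =>
      rw [iteratedDeriv_succ']
      have hd : deriv (fun z => p.eval z) = fun z => (Polynomial.derivative p).eval z := by
        funext z; exact p.deriv
      rw [hd, ih]
      funext z
      rw [Function.iterate_succ_apply]

lemma trailing_gt {P : ℚ[X]} (h0 : P ≠ 0) {d : ℕ} (h : ∀ m, m ≤ d → P.coeff m = 0) :
    d < P.natTrailingDegree := by
  by_contra hle
  push_neg at hle
  exact Polynomial.trailingCoeff_nonzero_iff_nonzero.mpr h0
    (by rw [Polynomial.trailingCoeff]; exact h _ hle)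

lemma chain {q : ℕ → ℚ[X]} (h0 : ∀ k, q k ≠ 0)
    (hadj : ∀ k m, m ≤ (q k).natDegree → (q (k+1)).coeff m = 0) :
    ∀ j k, j < k → (q j).natDegree < (q k).natTrailingDegree := by
  intro j k
  induction k with
  | zero => omega
  | succ k ih =>
      intro hjk
      have hk : (q k).natDegree < (q (k+1)).natTrailingDegree :=
        trailing_gt (h0 _) (hadj k)
      rcases Nat.lt_succ_iff_lt_or_eq.mp hjk with h | h
      · have h1 := ih h
        have h2 := Polynomial.natTrailingDegree_le_natDegree (q k)
        omega
      · subst h; exact hk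

lemma two_rpow_two : (2:ℝ)^(2:ℝ) = 4 := by
  rw [show (2:ℝ) = ((2:ℕ):ℝ) by norm_num, Real.rpow_natCast]
  norm_num

lemma growth_aux {δ : ℝ} (hδ0 : 0 < δ) (hδ2 : δ ≤ 2) :
    ∃ K : ℝ, 0 ≤ K ∧ ∀ R : ℝ, 0 ≤ R → (Real.log (1+R))^2 / 4 ≤ R ^ δ + K := by
  refine ⟨((16/δ^2)^2 + 4)/4, by positivity, ?_⟩
  intro R hR
  set x : ℝ := 1 + R with hx
  have hx1 : (1:ℝ) ≤ x := by simp only [hx]; linarith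
  have hx0 : (0:ℝ) < x := by linarith
  set L := Real.log x with hL
  have hL0 : 0 ≤ L := Real.log_nonneg hx1
  have h1 : L ≤ (4/δ) * x ^ (δ/4) := by
    have hlog : Real.log (x ^ (δ/4)) = (δ/4) * L := Real.log_rpow hx0 _
    have h2 : Real.log (x ^ (δ/4)) ≤ x ^ (δ/4) - 1 :=
      Real.log_le_sub_one_of_pos (Real.rpow_pos_of_pos hx0 _)
    have h3 : (δ/4) * L ≤ x ^ (δ/4) := by rw [← hlog]; linarith
    calc L = (4/δ) * ((δ/4) * L) := by field_simp
    _ ≤ (4/δ) * x^(δ/4) := by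
        apply mul_le_mul_of_nonneg_left h3 (by positivity)
  have hsq : L^2 ≤ (16/δ^2) * x ^ (δ/2) := by
    have hp2 := pow_le_pow_left₀ hL0 h1 2
    calc L^2 ≤ ((4/δ) * x^(δ/4))^2 := hp2
    _ = (16/δ^2) * (x^(δ/4))^2 := by ring
    _ = (16/δ^2) * x^(δ/2) := by
        rw [← Real.rpow_natCast (x^(δ/4)) 2, ← Real.rpow_mul hx0.le]
        congr 1
        push_cast
        ring
  have h3 : (16/δ^2) * x^(δ/2) ≤ (16/δ^2)^2 + x^δ := by
    have hxq : (x^(δ/2))^2 = x^δ := by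
      rw [← Real.rpow_natCast (x^(δ/2)) 2, ← Real.rpow_mul hx0.le]
      congr 1
      push_cast
      ring
    nlinarith [sq_nonneg ((16/δ^2) - x^(δ/2)), Real.rpow_nonneg (le_of_lt hx0) (δ/2),
      sq_nonneg (16/δ^2)]
  have h4 : x^δ ≤ 4 + 4 * R^δ := by
    have h6 : (2:ℝ)^δ ≤ 4 := by
      have := Real.rpow_le_rpow_of_exponent_le one_le_two hδ2
      rw [two_rpow_two] at this
      exact this
    by_cases hR1 : R ≤ 1
    · have hx2 : x ≤ 2 := by simp only [hx]; linarith
      have h5 : x^δ ≤ (2:ℝ)^δ := Real.rpow_le_rpow hx0.le hx2 (le_of_lt hδ0)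
      have h8 : 0 ≤ R^δ := Real.rpow_nonneg hR _
      linarith
    · push_neg at hR1
      have hx2R : x ≤ 2*R := by simp only [hx]; linarith
      have h5 : x^δ ≤ (2*R)^δ := Real.rpow_le_rpow hx0.le hx2R (le_of_lt hδ0)
      have h6' : (2*R)^δ = 2^δ * R^δ := Real.mul_rpow (by norm_num) hR
      nlinarith [Real.rpow_nonneg hR δ]
  linarith

lemma core (T : Set ℕ) (q : ℕ → ℚ[X]) (pq : ℚ)
    (h1 : ∀ k, q k ≠ 0)
    (h2 : ∀ k t, Even t → t ∉ T → (Polynomial.derivative^[t] (q k)).eval pq = 0)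
    (h3 : ∀ k t, Even t → (Polynomial.derivative^[t] (q k)).eval (1 - pq) = 0)
    (h4 : ∀ j k, j < k → (q j).natDegree < (q k).natTrailingDegree) :
    ∃ S : Set (ℂ → ℂ), ¬ S.Countable ∧
      ∀ f ∈ S,
        Differentiable ℂ f ∧
        (∀ ε : ℝ, 0 < ε → ∃ C : ℝ, 0 < C ∧ ∀ z : ℂ, ‖f z‖ ≤ C * Real.exp (‖z‖ ^ ε)) ∧
        (¬ ∃ P : Polynomial ℂ, ∀ z : ℂ, f z = P.eval z) ∧
        (∀ n : ℕ, ∃ r : ℚ, iteratedDeriv n f 0 = (Nat.factorial n : ℂ) * (r : ℂ)) ∧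
        (∀ t, Even t → t ∉ T → iteratedDeriv t f ((pq : ℂ)) = 0) ∧
        (∀ t, Even t → iteratedDeriv t f (1 - (pq:ℂ)) = 0) := by
  classical
  set φ : ℚ →+* ℂ := Rat.castHom ℂ with hφ
  set Q : ℕ → ℂ[X] := fun k => (q k).map φ with hQ
  set D : ℕ → ℕ := fun k => (q k).natDegree with hD
  set Bq : ℕ → ℚ := fun k => ∑ n ∈ (q k).support, |(q k).coeff n| with hBq
  set c : ℕ → ℚ := fun k => (1/2)^k * (1/3)^((D k)^2) * (1/(Bq k + 1)) with hc
  have hBq0 : ∀ k, 0 ≤ Bq k := fun k => Finset.sum_nonneg fun n _ => abs_nonneg _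
  have hc0 : ∀ k, 0 < c k := by
    intro k
    have h := hBq0 k
    apply mul_pos (mul_pos (by positivity) (by positivity))
    rw [one_div]
    exact inv_pos.mpr (by linarith)
  set e : Set ℕ → ℕ → ℂ := fun A k => if k ∈ A then (c k : ℂ) else 0 with he
  set F : Set ℕ → ℂ → ℂ := fun A z => ∑' k, e A k * (Q k).eval z with hF
  -- degree of Q
  have hQdeg : ∀ k, (Q k).natDegree = D k := fun k =>
    Polynomial.natDegree_map_eq_of_injective φ.injective _
  -- key uniform bound
  have key : ∀ (A : Set ℕ) (k : ℕ) (z : ℂ) (R : ℝ), ‖z‖ ≤ R →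
      ‖e A k * (Q k).eval z‖ ≤ (1/2:ℝ)^k * Real.exp ((Real.log (1+R))^2/4) := by
    intro A k z R hz
    have hR0 : (0:ℝ) ≤ R := le_trans (norm_nonneg z) hz
    have heval : ‖(Q k).eval z‖ ≤ (Bq k : ℝ) * (1+R)^(D k) := by
      rw [Polynomial.eval_eq_sum, Polynomial.sum_def]
      refine le_trans (norm_sum_le _ _) ?_
      have hsub := Polynomial.support_map_subset φ (q k)
      have hstep : ∀ n ∈ (Q k).support, ‖(Q k).coeff n * z ^ n‖
          ≤ |((q k).coeff n : ℝ)| * (1+R)^(D k) := by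
        intro n hn
        rw [norm_mul]
        have hcoeff : ‖(Q k).coeff n‖ = |((q k).coeff n : ℝ)| := by
          rw [hQ]
          simp only [Polynomial.coeff_map]
          rw [show φ ((q k).coeff n) = (((q k).coeff n : ℝ) : ℂ) by push_cast; rfl]
          rw [Complex.norm_real, Real.norm_eq_abs]
        have hzn : ‖z ^ n‖ ≤ (1+R)^(D k) := by
          rw [norm_pow]
          have h1' : ‖z‖ ^ n ≤ (1+R)^n :=
            pow_le_pow_left₀ (norm_nonneg z) (by linarith) n
          have h2' : (1+R)^n ≤ (1+R)^(D k) := by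
            apply pow_le_pow_right₀ (by linarith)
            have := Polynomial.le_natDegree_of_ne_zero (Polynomial.mem_support_iff.mp hn)
            rw [hQdeg k] at this
            exact this
          linarith
        calc ‖(Q k).coeff n‖ * ‖z^n‖ = |((q k).coeff n : ℝ)| * ‖z^n‖ := by rw [hcoeff]
        _ ≤ |((q k).coeff n : ℝ)| * (1+R)^(D k) := by
            apply mul_le_mul_of_nonneg_left hzn (abs_nonneg _)
      refine le_trans (Finset.sum_le_sum hstep) ?_
      rw [← Finset.sum_mul]
      refine mul_le_mul_of_nonneg_right ?_ (by positivity)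
      have : ((Bq k : ℚ) : ℝ) = ∑ n ∈ (q k).support, |((q k).coeff n : ℝ)| := by
        rw [hBq]
        push_cast
        rfl
      rw [this]
      refine Finset.sum_le_sum_of_subset_of_nonneg hsub ?_
      intro n _ _
      positivity
    -- bound on the scalar
    have hek : ‖e A k‖ ≤ (c k : ℝ) := by
      rw [he]
      by_cases hkA : k ∈ A
      · simp only [hkA, if_true]
        rw [show ((c k : ℚ) : ℂ) = (((c k : ℚ) : ℝ) : ℂ) by push_cast; rfl, Complex.norm_real,
          Real.norm_eq_abs, abs_of_pos (by exact_mod_cast hc0 k)]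
      · simp only [hkA, if_false, norm_zero]
        exact_mod_cast (hc0 k).le
    -- the exponential bound
    set L := Real.log (1+R) with hLdef
    have hL0 : 0 ≤ L := Real.log_nonneg (by linarith)
    have hexp1 : ((1:ℝ)+R)^(D k) = Real.exp ((D k : ℝ) * L) := by
      rw [Real.exp_nat_mul, Real.exp_log (by linarith)]
    have hexp2 : ((1:ℝ)/3)^((D k)^2) ≤ Real.exp (-(((D k)^2 : ℕ) : ℝ)) := by
      have h13 : (1:ℝ)/3 ≤ Real.exp (-1) := by
        rw [Real.exp_neg]
        have h3 : Real.exp 1 < 3 := lt_trans Real.exp_one_lt_d9 (by norm_num)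
        rw [div_le_iff₀ (by norm_num : (0:ℝ) < 3)]
        rw [inv_mul_eq_div, le_div_iff₀ (Real.exp_pos 1)]
        linarith
      calc ((1:ℝ)/3)^((D k)^2) ≤ (Real.exp (-1))^((D k)^2) :=
            pow_le_pow_left₀ (by norm_num) h13 _
      _ = Real.exp ((((D k)^2 : ℕ) : ℝ) * (-1)) := by rw [Real.exp_nat_mul]
      _ = Real.exp (-(((D k)^2 : ℕ) : ℝ)) := by ring_nf
    have hprod : ((1:ℝ)/3)^((D k)^2) * ((1:ℝ)+R)^(D k) ≤ Real.exp (L^2/4) := by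
      rw [hexp1]
      calc ((1:ℝ)/3)^((D k)^2) * Real.exp ((D k : ℝ) * L)
          ≤ Real.exp (-(((D k)^2 : ℕ) : ℝ)) * Real.exp ((D k : ℝ) * L) := by
            apply mul_le_mul_of_nonneg_right hexp2 (Real.exp_pos _).le
      _ = Real.exp ((D k : ℝ) * L - (((D k)^2 : ℕ) : ℝ)) := by
            rw [← Real.exp_add]; ring_nf
      _ ≤ Real.exp (L^2/4) := by
            apply Real.exp_le_exp.mpr
            push_cast
            nlinarith [sq_nonneg (L - 2*((D k : ℕ) : ℝ)), hL0]
    -- put everything together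
    have hcR : (c k : ℝ) = (1/2:ℝ)^k * (1/3:ℝ)^((D k)^2) * (1/((Bq k : ℝ)+1)) := by
      rw [hc]; push_cast; ring
    have hBqR : (0:ℝ) ≤ (Bq k : ℝ) := by exact_mod_cast hBq0 k
    calc ‖e A k * (Q k).eval z‖ = ‖e A k‖ * ‖(Q k).eval z‖ := norm_mul _ _
    _ ≤ (c k : ℝ) * ((Bq k : ℝ) * (1+R)^(D k)) := by
        apply mul_le_mul hek heval (norm_nonneg _) (by exact_mod_cast (hc0 k).le)
    _ = (1/2:ℝ)^k * (((1:ℝ)/3)^((D k)^2) * ((1:ℝ)+R)^(D k)) * ((Bq k : ℝ)/((Bq k : ℝ)+1)) := by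
        rw [hcR]; ring
    _ ≤ (1/2:ℝ)^k * Real.exp (L^2/4) * 1 := by
        apply mul_le_mul
        · apply mul_le_mul_of_nonneg_left hprod (by positivity)
        · rw [div_le_one (by linarith)]; linarith
        · positivity
        · positivity
    _ = (1/2:ℝ)^k * Real.exp (L^2/4) := by ring
  -- summability of the geometric majorant
  have hu : ∀ R : ℝ, Summable (fun k : ℕ => (1/2:ℝ)^k * Real.exp ((Real.log (1+R))^2/4)) :=
    fun R => (summable_geometric_of_lt_one (by norm_num) (by norm_num)).mul_right _
  have hsummable : ∀ (A : Set ℕ) (z : ℂ), Summable (fun k => ‖e A k * (Q k).eval z‖) :=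
    fun A z => Summable.of_nonneg_of_le (fun k => norm_nonneg _)
      (fun k => key A k z ‖z‖ le_rfl) (hu ‖z‖)
  -- locally uniform convergence of all derivative partial sums
  have hgdiff : ∀ (A : Set ℕ) (n k : ℕ),
      Differentiable ℂ (fun z => e A k * (Polynomial.derivative^[n] (Q k)).eval z) :=
    fun A n k => (Polynomial.differentiable _).const_mul _
  have hTLU : ∀ (A : Set ℕ) (n : ℕ), TendstoLocallyUniformlyOn
      (fun (N : ℕ) (z : ℂ) =>
        ∑ k ∈ Finset.range N, e A k * (Polynomial.derivative^[n] (Q k)).eval z)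
      (iteratedDeriv n (F A)) Filter.atTop Set.univ := by
    intro A n
    induction n with
    | zero =>
        simp only [Function.iterate_zero, id_eq, iteratedDeriv_zero]
        rw [tendstoLocallyUniformlyOn_iff_forall_isCompact isOpen_univ]
        intro K _ hK
        obtain ⟨R, hR⟩ := hK.isBounded.subset_closedBall 0
        refine TendstoUniformlyOn.mono ?_ hR
        have := tendstoUniformlyOn_tsum_nat (hu R)
          (f := fun k z => e A k * (Q k).eval z) (s := Metric.closedBall 0 R) ?_
        · exact this
        · intro k z hz
          exact key A k z R (by simpa [Metric.mem_closedBall, dist_eq_norm] using hz)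
    | succ n ih =>
        have hstep := ih.deriv (Filter.Eventually.of_forall
          (fun N => Differentiable.differentiableOn
            (Differentiable.fun_sum fun k _ => hgdiff A n k))) isOpen_univ
        rw [iteratedDeriv_succ]
        have heq : (deriv ∘ fun (N : ℕ) (z : ℂ) =>
            ∑ k ∈ Finset.range N, e A k * (Polynomial.derivative^[n] (Q k)).eval z)
            = fun (N : ℕ) (z : ℂ) =>
            ∑ k ∈ Finset.range N, e A k * (Polynomial.derivative^[n+1] (Q k)).eval z := by
          funext N z
          simp only [Function.comp_apply]
          rw [deriv_fun_sum (fun k _ => (hgdiff A n k).differentiableAt)]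
          refine Finset.sum_congr rfl fun k _ => ?_
          rw [deriv_const_mul _ ((Polynomial.differentiable _).differentiableAt)]
          congr 1
          rw [Polynomial.deriv, Function.iterate_succ_apply']
        rw [← heq]
        exact hstep
  have hpt : ∀ (A : Set ℕ) (n : ℕ) (z : ℂ), Filter.Tendsto
      (fun N => ∑ k ∈ Finset.range N, e A k * (Polynomial.derivative^[n] (Q k)).eval z)
      Filter.atTop (nhds (iteratedDeriv n (F A) z)) :=
    fun A n z => (hTLU A n).tendsto_at (Set.mem_univ z)
  have hdiffF : ∀ A : Set ℕ, Differentiable ℂ (F A) := by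
    intro A
    have h0 := hTLU A 0
    simp only [Function.iterate_zero, id_eq, iteratedDeriv_zero] at h0
    have := h0.differentiableOn (Filter.Eventually.of_forall
      (fun N => Differentiable.differentiableOn
        (Differentiable.fun_sum fun k _ => hgdiff A 0 k))) isOpen_univ
    exact differentiableOn_univ.mp this
  -- transfer of rational evaluations
  have hQder : ∀ (k n : ℕ) (a : ℚ),
      (Polynomial.derivative^[n] (Q k)).eval ((a:ℂ))
        = (((Polynomial.derivative^[n] (q k)).eval a : ℚ) : ℂ) := by
    intro k n a
    show (Polynomial.derivative^[n] ((q k).map φ)).eval (a:ℂ) = _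
    rw [Polynomial.iterate_derivative_map]
    rw [show ((a:ℚ):ℂ) = φ a from rfl]
    rw [Polynomial.eval_map, Polynomial.eval₂_at_apply]
    rfl
  have hvanish1 : ∀ (A : Set ℕ) t, Even t → t ∉ T → iteratedDeriv t (F A) ((pq : ℂ)) = 0 := by
    intro A t ht hT
    have hp := hpt A t ((pq : ℂ))
    have hzero : (fun N => ∑ k ∈ Finset.range N,
        e A k * (Polynomial.derivative^[t] (Q k)).eval ((pq:ℂ))) = fun _ => (0:ℂ) := by
      funext N
      refine Finset.sum_eq_zero fun k _ => ?_
      rw [hQder k t pq, h2 k t ht hT]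
      simp
    rw [hzero] at hp
    exact (tendsto_nhds_unique hp tendsto_const_nhds)
  have hvanish2 : ∀ (A : Set ℕ) t, Even t → iteratedDeriv t (F A) (1 - (pq : ℂ)) = 0 := by
    intro A t ht
    have hcast : (1 - (pq:ℂ)) = (((1 - pq : ℚ)) : ℂ) := by push_cast; ring
    have hp := hpt A t (((1 - pq : ℚ)) : ℂ)
    have hzero : (fun N => ∑ k ∈ Finset.range N,
        e A k * (Polynomial.derivative^[t] (Q k)).eval (((1 - pq : ℚ)):ℂ)) = fun _ => (0:ℂ) := by
      funext N
      refine Finset.sum_eq_zero fun k _ => ?_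
      rw [hQder k t (1 - pq), h3 k t ht]
      simp
    rw [hzero] at hp
    rw [hcast]
    exact (tendsto_nhds_unique hp tendsto_const_nhds)
  have hDdef : ∀ j, D j = (q j).natDegree := fun j => by rw [hD]
  have hmono : ∀ k, k ≤ D k := by
    intro k
    induction k with
    | zero => exact Nat.zero_le _
    | succ k ih =>
        have hk := h4 k (k+1) (lt_add_one k)
        have h5 := Polynomial.natTrailingDegree_le_natDegree (q (k+1))
        have h6 := hDdef k
        have h7 := hDdef (k+1)
        omega
  have hQ0 : ∀ k n, (Polynomial.derivative^[n] (Q k)).eval 0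
      = (n.factorial : ℂ) * (((q k).coeff n : ℚ) : ℂ) := by
    intro k n
    have h := hQder k n 0
    rw [show ((0:ℚ):ℂ) = (0:ℂ) by norm_num] at h
    rw [h, iter_deriv_eval, Polynomial.taylor_zero]
    push_cast
    ring
  have hderiv0 : ∀ (A : Set ℕ) (n : ℕ), iteratedDeriv n (F A) 0
      = (n.factorial : ℂ) *
        ((∑ k ∈ Finset.range (n+1), (if k ∈ A then c k else 0) * (q k).coeff n : ℚ) : ℂ) := by
    intro A n
    have hp := hpt A n 0
    have hterm0 : ∀ k, n < k → e A k * (Polynomial.derivative^[n] (Q k)).eval 0 = 0 := by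
      intro k hk
      rw [hQ0]
      have hc' : (q k).coeff n = 0 := by
        apply Polynomial.coeff_eq_zero_of_lt_natTrailingDegree
        have h5 := h4 n k hk
        have h6 := hmono n
        have h7 := hDdef n
        omega
      rw [hc']
      simp
    have hconst : ∀ N, n+1 ≤ N →
        (∑ k ∈ Finset.range N, e A k * (Polynomial.derivative^[n] (Q k)).eval 0)
        = ∑ k ∈ Finset.range (n+1), e A k * (Polynomial.derivative^[n] (Q k)).eval 0 := by
      intro N hN
      symm
      apply Finset.sum_subset (Finset.range_subset_range.mpr hN)
      intro k hk hk'
      simp only [Finset.mem_range] at hk hk'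
      exact hterm0 k (by omega)
    have hlim : Filter.Tendsto
        (fun N => ∑ k ∈ Finset.range N, e A k * (Polynomial.derivative^[n] (Q k)).eval 0)
        Filter.atTop
        (nhds (∑ k ∈ Finset.range (n+1), e A k * (Polynomial.derivative^[n] (Q k)).eval 0)) := by
      apply Filter.Tendsto.congr' _ tendsto_const_nhds
      filter_upwards [Filter.eventually_ge_atTop (n+1)] with N hN
      exact (hconst N hN).symm
    have heqv := tendsto_nhds_unique hp hlim
    rw [heqv]
    push_cast [Finset.mul_sum]
    refine Finset.sum_congr rfl fun k _ => ?_
    rw [hQ0]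
    simp only [he, apply_ite (fun x : ℚ => (x:ℂ))]
    push_cast
    split_ifs <;> ring
  have hdetect : ∀ (A : Set ℕ) (k : ℕ), iteratedDeriv (D k) (F A) 0
      = ((D k).factorial : ℂ) * (((if k ∈ A then c k * (q k).leadingCoeff else 0 : ℚ)) : ℂ) := by
    intro A k
    rw [hderiv0 A (D k)]
    congr 1
    have hqq : (∑ j ∈ Finset.range (D k + 1), (if j ∈ A then c j else 0) * (q j).coeff (D k) : ℚ)
        = (if k ∈ A then c k * (q k).leadingCoeff else 0 : ℚ) := by
      rw [Finset.sum_eq_single k]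
      · rw [Polynomial.leadingCoeff]
        show (if k ∈ A then c k else 0) * (q k).coeff (D k) = _
        split_ifs <;> ring
      · intro j hj hjk
        have hcj : (q j).coeff (D k) = 0 := by
          rcases lt_or_gt_of_ne hjk with hlt | hgt
          · apply Polynomial.coeff_eq_zero_of_natDegree_lt
            have h5 := h4 j k hlt
            have h6 := Polynomial.natTrailingDegree_le_natDegree (q k)
            have h7 := hDdef k
            omega
          · apply Polynomial.coeff_eq_zero_of_lt_natTrailingDegree
            exact h4 k j hgt
        rw [hcj, mul_zero]
      · intro hk
        exfalso
        apply hk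
        simp only [Finset.mem_range]
        have := hmono k
        omega
    rw [hqq]
  -- injectivity of A ↦ F A on infinite sets
  have hlead : ∀ k, c k * (q k).leadingCoeff ≠ 0 := fun k =>
    mul_ne_zero (ne_of_gt (hc0 k)) (Polynomial.leadingCoeff_ne_zero.mpr (h1 k))
  have hinj : Set.InjOn F {A : Set ℕ | A.Infinite} := by
    intro A _ B _ hFAB
    by_contra hne
    have hex : ∃ k, (k ∈ A ∧ k ∉ B) ∨ (k ∈ B ∧ k ∉ A) := by
      by_contra hcon
      push_neg at hcon
      apply hne
      ext k
      have := hcon k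
      tauto
    obtain ⟨k, hk⟩ := hex
    have hda := hdetect A k
    have hdb := hdetect B k
    rw [hFAB] at hda
    have heq := hda.symm.trans hdb
    have hfac : (((D k).factorial : ℕ) : ℂ) ≠ 0 := by
      exact_mod_cast Nat.cast_ne_zero.mpr (Nat.factorial_ne_zero _)
    have heq2 := mul_left_cancel₀ hfac heq
    have heq3 : (if k ∈ A then c k * (q k).leadingCoeff else 0 : ℚ)
        = (if k ∈ B then c k * (q k).leadingCoeff else 0 : ℚ) := by
      exact_mod_cast heq2
    rcases hk with ⟨hkA, hkB⟩ | ⟨hkB, hkA⟩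
    · rw [if_pos hkA, if_neg hkB] at heq3
      exact hlead k heq3
    · rw [if_neg hkA, if_pos hkB] at heq3
      exact hlead k heq3.symm
  -- uncountability
  have huncount : ¬ (F '' {A : Set ℕ | A.Infinite}).Countable := by
    intro hcnt
    have hdom : {A : Set ℕ | A.Infinite}.Countable :=
      Set.countable_of_injective_of_countable_image hinj hcnt
    have hfin : {A : Set ℕ | ¬ A.Infinite}.Countable := by
      refine (Set.countable_setOf_finite_subset (Set.countable_univ : (Set.univ : Set ℕ).Countable)).mono ?_
      intro A hA
      exact ⟨Set.not_infinite.mp hA, Set.subset_univ _⟩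
    have huniv : (Set.univ : Set (Set ℕ)).Countable := by
      have hsplit : (Set.univ : Set (Set ℕ))
          = {A | A.Infinite} ∪ {A | ¬ A.Infinite} := by
        ext A
        simp only [Set.mem_univ, Set.mem_union, Set.mem_setOf_eq, true_iff]
        exact em _
      rw [hsplit]
      exact hdom.union hfin
    rw [Set.countable_univ_iff] at huniv
    obtain ⟨g, hg⟩ := Countable.exists_injective_nat (Set ℕ)
    exact Function.cantor_injective g hg
  -- non-polynomiality
  have hnonpoly : ∀ A : Set ℕ, A.Infinite → ¬ ∃ P : ℂ[X], ∀ z : ℂ, F A z = P.eval z := by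
    rintro A hA ⟨P, hP⟩
    obtain ⟨k, hkA, hkgt⟩ := hA.exists_gt P.natDegree
    have hFP : F A = fun z => P.eval z := funext hP
    have hval := hdetect A k
    rw [hFP] at hval
    have hz : iteratedDeriv (D k) (fun z => P.eval z) 0 = 0 := by
      rw [polyIterDeriv]
      rw [Polynomial.iterate_derivative_eq_zero (by
        have h5 := hmono k
        have h6 := hDdef k
        omega)]
      simp
    rw [hz] at hval
    rw [if_pos hkA] at hval
    have hfac : (((D k).factorial : ℕ) : ℂ) ≠ 0 :=
      Nat.cast_ne_zero.mpr (Nat.factorial_ne_zero _)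
    have hzero := (mul_eq_zero.mp hval.symm).resolve_left hfac
    exact hlead k (by exact_mod_cast hzero)
  -- growth
  have hgrowth : ∀ (A : Set ℕ) (ε : ℝ), 0 < ε → ∃ C : ℝ, 0 < C ∧
      ∀ z : ℂ, ‖F A z‖ ≤ C * Real.exp (‖z‖ ^ ε) := by
    intro A ε hε
    set δ := min ε 2 with hδ
    have hδ0 : 0 < δ := lt_min hε (by norm_num)
    have hδ2 : δ ≤ 2 := min_le_right _ _
    obtain ⟨K, hK0, hK⟩ := growth_aux hδ0 hδ2
    refine ⟨2 * Real.exp (K + 1), by positivity, ?_⟩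
    intro z
    set R := ‖z‖ with hR
    have hR0 : 0 ≤ R := norm_nonneg z
    have hb1 : ‖F A z‖ ≤ ∑' k, ((1/2:ℝ)^k * Real.exp ((Real.log (1+R))^2/4)) := by
      refine le_trans (norm_tsum_le_tsum_norm (hsummable A z)) ?_
      exact Summable.tsum_le_tsum (fun k => key A k z R le_rfl) (hsummable A z) (hu R)
    have hb2 : ∑' k, ((1/2:ℝ)^k * Real.exp ((Real.log (1+R))^2/4))
        = 2 * Real.exp ((Real.log (1+R))^2/4) := by
      rw [tsum_mul_right, tsum_geometric_of_lt_one (by norm_num) (by norm_num)]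
      norm_num
    have hb3 : (Real.log (1+R))^2/4 ≤ R ^ δ + K := hK R hR0
    have hb4 : R ^ δ ≤ R ^ ε + 1 := by
      by_cases hR1 : R ≤ 1
      · have := Real.rpow_le_one hR0 hR1 hδ0.le
        have h8 : 0 ≤ R ^ ε := Real.rpow_nonneg hR0 _
        linarith
      · push_neg at hR1
        have := Real.rpow_le_rpow_of_exponent_le hR1.le (min_le_left ε 2)
        have h8 : (0:ℝ) ≤ R ^ ε := Real.rpow_nonneg hR0 _
        linarith [this]
    calc ‖F A z‖ ≤ 2 * Real.exp ((Real.log (1+R))^2/4) := by rw [← hb2]; exact hb1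
    _ ≤ 2 * Real.exp (R ^ ε + 1 + K) := by
        have : (Real.log (1+R))^2/4 ≤ R ^ ε + 1 + K := by linarith
        have h9 := Real.exp_le_exp.mpr this
        linarith
    _ = (2 * Real.exp (K + 1)) * Real.exp (R ^ ε) := by
        rw [mul_assoc, ← Real.exp_add]
        congr 1
        ring
  -- assemble
  refine ⟨F '' {A : Set ℕ | A.Infinite}, huncount, ?_⟩
  rintro f ⟨A, hA, rfl⟩
  refine ⟨hdiffF A, hgrowth A, hnonpoly A hA, ?_, hvanish1 A, hvanish2 A⟩
  intro n
  exact ⟨_, hderiv0 A n⟩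

lemma buildP (T : Set ℕ) (hT : T.Infinite) (hTe : ∀ t ∈ T, Even t) :
    ∃ P : ℕ → ℚ[X], (∀ k, P k ≠ 0) ∧ (∀ k n, Even n → (P k).coeff n = 0) ∧
      (∀ k s, Even s → s ∉ T → (Polynomial.taylor 1 (P k)).coeff s = 0) ∧
      (∀ k m, m ≤ (P k).natDegree →
        (P (k+1)).coeff m = 0 ∧ (Polynomial.taylor 1 (P (k+1))).coeff m = 0) := by
  have hB := fun v => lemB T hT hTe v
  choose B hB1 hB2 hB3 hB4 hB5 using hB
  let vs : ℕ → ℕ := fun k => Nat.rec 0 (fun _ prev => (B prev).natDegree + 1) k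
  refine ⟨fun k => B (vs k), fun k => hB1 _, fun k n => hB2 _ n, fun k s => hB3 _ s, ?_⟩
  intro k m hm
  have hm' : m ≤ (B (vs k)).natDegree := hm
  have hv : vs (k+1) = (B (vs k)).natDegree + 1 := rfl
  constructor
  · exact hB4 _ m (by rw [hv]; omega)
  · exact hB5 _ m (by rw [hv]; omega)

/-- The two instantiations of `core`. -/
lemma caseOne (T : Set ℕ) (hT : T.Infinite) (hTe : ∀ t ∈ T, Even t) :
    ∃ S : Set (ℂ → ℂ), ¬ S.Countable ∧
      ∀ f ∈ S,
        Differentiable ℂ f ∧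
        (∀ ε : ℝ, 0 < ε → ∃ C : ℝ, 0 < C ∧ ∀ z : ℂ, ‖f z‖ ≤ C * Real.exp (‖z‖ ^ ε)) ∧
        (¬ ∃ P : Polynomial ℂ, ∀ z : ℂ, f z = P.eval z) ∧
        (∀ n : ℕ, ∃ r : ℚ, iteratedDeriv n f 0 = (Nat.factorial n : ℂ) * (r : ℂ)) ∧
        (∀ t, Even t → t ∉ T → iteratedDeriv t f 1 = 0) ∧
        (∀ t, Even t → iteratedDeriv t f 0 = 0) := by
  obtain ⟨P, hP1, hP2, hP3, hP4⟩ := buildP T hT hTe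
  have hcore := core T P 1 hP1 ?_ ?_ ?_
  · obtain ⟨S, hS, hprop⟩ := hcore
    refine ⟨S, hS, ?_⟩
    intro f hf
    obtain ⟨hd, hg, hnp, hr, hv1, hv2⟩ := hprop f hf
    refine ⟨hd, hg, hnp, hr, ?_, ?_⟩
    · intro t ht hT'
      have := hv1 t ht hT'
      rwa [show ((1:ℚ):ℂ) = 1 by norm_num] at this
    · intro t ht
      have := hv2 t ht
      rwa [show (1 - ((1:ℚ):ℂ)) = 0 by norm_num] at this
  · intro k t ht hT'
    rw [iter_deriv_eval, hP3 k t ht hT', mul_zero]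
  · intro k t ht
    rw [show (1 - 1 : ℚ) = 0 by norm_num, iter_deriv_eval, Polynomial.taylor_zero,
      hP2 k t ht, mul_zero]
  · exact chain hP1 (fun k m hm => (hP4 k m hm).1)

lemma natDegree_one_sub_X : (1 - X : ℚ[X]).natDegree = 1 := by
  rw [show (1 - X : ℚ[X]) = -(X - Polynomial.C 1) by simp, Polynomial.natDegree_neg,
    Polynomial.natDegree_X_sub_C]

lemma comp_one_sub_one_sub (P : ℚ[X]) : (P.comp (1 - X)).comp (1 - X) = P := by
  rw [Polynomial.comp_assoc]
  rw [show ((1 - X : ℚ[X]).comp (1 - X)) = X by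
    simp [Polynomial.sub_comp]]
  rw [Polynomial.comp_X]

lemma comp_eq_taylor_comp_neg (P : ℚ[X]) :
    P.comp (1 - X) = (Polynomial.taylor 1 P).comp (-X) := by
  rw [Polynomial.taylor_apply, Polynomial.comp_assoc]
  congr 1
  simp [Polynomial.add_comp]
  ring

lemma taylor_comp_one_sub (P : ℚ[X]) :
    Polynomial.taylor 1 (P.comp (1 - X)) = P.comp (-X) := by
  rw [Polynomial.taylor_apply, Polynomial.comp_assoc]
  congr 1
  simp [Polynomial.sub_comp]

lemma caseZero (T : Set ℕ) (hT : T.Infinite) (hTe : ∀ t ∈ T, Even t) :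
    ∃ S : Set (ℂ → ℂ), ¬ S.Countable ∧
      ∀ f ∈ S,
        Differentiable ℂ f ∧
        (∀ ε : ℝ, 0 < ε → ∃ C : ℝ, 0 < C ∧ ∀ z : ℂ, ‖f z‖ ≤ C * Real.exp (‖z‖ ^ ε)) ∧
        (¬ ∃ P : Polynomial ℂ, ∀ z : ℂ, f z = P.eval z) ∧
        (∀ n : ℕ, ∃ r : ℚ, iteratedDeriv n f 0 = (Nat.factorial n : ℂ) * (r : ℂ)) ∧
        (∀ t, Even t → t ∉ T → iteratedDeriv t f 0 = 0) ∧
        (∀ t, Even t → iteratedDeriv t f 1 = 0) := by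
  obtain ⟨P, hP1, hP2, hP3, hP4⟩ := buildP T hT hTe
  set q : ℕ → ℚ[X] := fun k => (P k).comp (1 - X) with hq
  have hq1 : ∀ k, q k ≠ 0 := by
    intro k hk
    apply hP1 k
    have := congrArg (fun p => p.comp (1 - X)) hk
    simpa [hq, comp_one_sub_one_sub] using this
  have hqdeg : ∀ k, (q k).natDegree = (P k).natDegree := by
    intro k
    rw [hq]
    simp only
    rw [Polynomial.natDegree_comp, natDegree_one_sub_X, mul_one]
  have hcore := core T q 0 hq1 ?_ ?_ ?_
  · obtain ⟨S, hS, hprop⟩ := hcore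
    refine ⟨S, hS, ?_⟩
    intro f hf
    obtain ⟨hd, hg, hnp, hr, hv1, hv2⟩ := hprop f hf
    refine ⟨hd, hg, hnp, hr, ?_, ?_⟩
    · intro t ht hT'
      have := hv1 t ht hT'
      rwa [show ((0:ℚ):ℂ) = 0 by norm_num] at this
    · intro t ht
      have := hv2 t ht
      rwa [show (1 - ((0:ℚ):ℂ)) = 1 by norm_num] at this
  · intro k t ht hT'
    rw [iter_deriv_eval, Polynomial.taylor_zero]
    have : (q k).coeff t = 0 := by
      rw [hq]
      simp only
      rw [comp_eq_taylor_comp_neg, coeff_comp_neg, hP3 k t ht hT', mul_zero]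
    rw [this, mul_zero]
  · intro k t ht
    rw [show (1 - 0 : ℚ) = 1 by norm_num, iter_deriv_eval]
    have : (Polynomial.taylor 1 (q k)).coeff t = 0 := by
      rw [hq]
      simp only
      rw [taylor_comp_one_sub, coeff_comp_neg, hP2 k t ht, mul_zero]
    rw [this, mul_zero]
  · refine chain hq1 ?_
    intro k m hm
    rw [hqdeg] at hm
    rw [hq]
    simp only
    rw [comp_eq_taylor_comp_neg, coeff_comp_neg, (hP4 k m hm).2, mul_zero]

end UMC

/-- **Lemma 3 (counterexample lemma).** Let `E` be an infinite subset of `2ℕ × {0,1}`.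
Then there is an uncountable set `S` of entire functions `f` of order `0`, not
polynomials (hence transcendental), with rational Taylor coefficients at the origin,
such that `f^{(t)}(i) = 0` for all `(t,i) ∈ (2ℕ × {0,1}) \ E`. -/
theorem uncountably_many_counterexamples (E : Set (ℕ × ℕ))
    (hEsub : E ⊆ {p : ℕ × ℕ | Even p.1 ∧ (p.2 = 0 ∨ p.2 = 1)})
    (hEinf : E.Infinite) :
    ∃ S : Set (ℂ → ℂ), ¬ S.Countable ∧
      ∀ f ∈ S,
        Differentiable ℂ f ∧
        (∀ ε : ℝ, 0 < ε → ∃ C : ℝ, 0 < C ∧ ∀ z : ℂ, ‖f z‖ ≤ C * Real.exp (‖z‖ ^ ε)) ∧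
        (¬ ∃ P : Polynomial ℂ, ∀ z : ℂ, f z = P.eval z) ∧
        (∀ n : ℕ, ∃ q : ℚ, iteratedDeriv n f 0 = (Nat.factorial n : ℂ) * (q : ℂ)) ∧
        (∀ t i : ℕ, Even t → (i = 0 ∨ i = 1) → (t, i) ∉ E →
          iteratedDeriv t f (i : ℂ) = 0) := by
  classical
  have hsplit : ({t | (t,(0:ℕ)) ∈ E}).Infinite ∨ ({t | (t,(1:ℕ)) ∈ E}).Infinite := by
    by_contra hcon
    push_neg at hcon
    obtain ⟨hf0, hf1⟩ := hcon
    apply hEinf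
    have hsub : E ⊆ (fun t => (t,(0:ℕ))) '' {t | (t,(0:ℕ)) ∈ E}
        ∪ (fun t => (t,(1:ℕ))) '' {t | (t,(1:ℕ)) ∈ E} := by
      intro p hp
      obtain ⟨hev, h01⟩ := hEsub hp
      rcases h01 with h0 | h1
      · left
        have hpe : (p.1, (0:ℕ)) = p := by
          rw [← h0]
        exact ⟨p.1, by rw [Set.mem_setOf_eq, hpe]; exact hp, hpe⟩
      · right
        have hpe : (p.1, (1:ℕ)) = p := by
          rw [← h1]
        exact ⟨p.1, by rw [Set.mem_setOf_eq, hpe]; exact hp, hpe⟩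
    exact ((hf0.image _).union (hf1.image _)).subset hsub
  rcases hsplit with hT | hT
  · -- the point 0 carries infinitely many elements of E
    set T : Set ℕ := {t | (t,(0:ℕ)) ∈ E} with hTdef
    have hTe : ∀ t ∈ T, Even t := fun t ht => (hEsub ht).1
    obtain ⟨S, hS, hprop⟩ := UMC.caseZero T hT hTe
    refine ⟨S, hS, ?_⟩
    intro f hf
    obtain ⟨hd, hg, hnp, hr, hv0, hv1⟩ := hprop f hf
    refine ⟨hd, hg, hnp, hr, ?_⟩
    intro t i ht hi hE
    rcases hi with rfl | rfl
    · have htT : t ∉ T := fun hmem => hE hmem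
      simpa using hv0 t ht htT
    · simpa using hv1 t ht
  · set T : Set ℕ := {t | (t,(1:ℕ)) ∈ E} with hTdef
    have hTe : ∀ t ∈ T, Even t := fun t ht => (hEsub ht).1
    obtain ⟨S, hS, hprop⟩ := UMC.caseOne T hT hTe
    refine ⟨S, hS, ?_⟩
    intro f hf
    obtain ⟨hd, hg, hnp, hr, hv1, hv0⟩ := hprop f hf
    refine ⟨hd, hg, hnp, hr, ?_⟩
    intro t i ht hi hE
    rcases hi with rfl | rfl
    · simpa using hv0 t ht
    · have htT : t ∉ T := fun hmem => hE hmem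
      simpa using hv1 t ht htT
end

section
/- For every z ∈ ℂ and every ζ ∈ ℂ with 0 < |ζ| < π, the identity e^{ζz} = Σ_{k≥0} Λ_{2k,0}(z)·ζ^{2k} + e^{ζ}·Σ_{k≥0} Λ_{2k,1}(z)·ζ^{2k} holds, where both series converge. -/
open Real Polynomial Finset Topology Filter

noncomputable def lidL : ℕ → Polynomial ℂ
  | n => Polynomial.C ((((2 * n + 1).factorial : ℕ) : ℂ))⁻¹ * Polynomial.X ^ (2 * n + 1) -
      ∑ k ∈ (Finset.range n).attach,
        Polynomial.C ((((2 * (n - k.1) + 1).factorial : ℕ) : ℂ))⁻¹ * lidL k.1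
  decreasing_by exact Finset.mem_range.mp k.2

lemma lidL_def (n : ℕ) : lidL n =
    Polynomial.C ((((2 * n + 1).factorial : ℕ) : ℂ))⁻¹ * Polynomial.X ^ (2 * n + 1) -
      ∑ k ∈ Finset.range n,
        Polynomial.C ((((2 * (n - k) + 1).factorial : ℕ) : ℂ))⁻¹ * lidL k := by
  rw [lidL]; congr 1; exact Finset.sum_attach (Finset.range n) (fun k => Polynomial.C ((((2 * (n - k) + 1).factorial : ℕ) : ℂ))⁻¹ * lidL k)

lemma iter_eval_zero (a : ℂ) (n j : ℕ) :
    ((Polynomial.derivative^[2 * j] (Polynomial.C a * Polynomial.X ^ (2 * n + 1))).eval 0) = 0 := by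
  rw [Polynomial.iterate_derivative_C_mul, Polynomial.iterate_derivative_X_pow_eq_natCast_mul]
  rcases le_or_gt (2 * j) (2 * n + 1) with h | h
  · have h0 : 2 * n + 1 - 2 * j ≠ 0 := by omega
    simp [zero_pow h0]
  · simp [Nat.descFactorial_eq_zero_iff_lt.mpr h]

lemma iter_eval_one (n j : ℕ) :
    ((Polynomial.derivative^[2 * j]
        (Polynomial.C ((((2 * n + 1).factorial : ℕ) : ℂ))⁻¹ * Polynomial.X ^ (2 * n + 1))).eval 1)
      = if j ≤ n then ((((2 * (n - j) + 1).factorial : ℕ) : ℂ))⁻¹ else 0 := by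
  rw [Polynomial.iterate_derivative_C_mul, Polynomial.iterate_derivative_X_pow_eq_natCast_mul]
  simp only [Polynomial.eval_mul, Polynomial.eval_C, Polynomial.eval_natCast,
    Polynomial.eval_pow, Polynomial.eval_X, one_pow, mul_one]
  split_ifs with h
  · have h2 : 2 * j ≤ 2 * n + 1 := by omega
    have key : ((2 * n + 1 - 2 * j).factorial) * ((2 * n + 1).descFactorial (2 * j))
        = (2 * n + 1).factorial := Nat.factorial_mul_descFactorial h2
    have h3 : 2 * (n - j) + 1 = 2 * n + 1 - 2 * j := by omega
    have keyC : (((2 * (n - j) + 1).factorial : ℕ) : ℂ) * (((2 * n + 1).descFactorial (2 * j) : ℕ) : ℂ)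
        = (((2 * n + 1).factorial : ℕ) : ℂ) := by rw [h3]; exact_mod_cast key
    have hne : (((2 * n + 1).factorial : ℕ) : ℂ) ≠ 0 := Nat.cast_ne_zero.mpr (2 * n + 1).factorial_ne_zero
    have hne2 : (((2 * (n - j) + 1).factorial : ℕ) : ℂ) ≠ 0 := Nat.cast_ne_zero.mpr (2 * (n - j) + 1).factorial_ne_zero
    field_simp
    linear_combination keyC
  · rw [Nat.descFactorial_eq_zero_iff_lt.mpr (by omega)]
    simp

lemma lidL_eval_zero (n : ℕ) : ∀ j, ((Polynomial.derivative^[2 * j] (lidL n)).eval 0) = 0 := by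
  induction n using Nat.strong_induction_on with
  | _ n ih =>
    intro j
    rw [lidL_def, Polynomial.iterate_derivative_sub]
    rw [Polynomial.eval_sub, iter_eval_zero, Polynomial.iterate_derivative_sum,
      Polynomial.eval_finset_sum, Finset.sum_eq_zero, sub_zero]
    intro k hk
    rw [Polynomial.iterate_derivative_C_mul, Polynomial.eval_mul,
      ih k (Finset.mem_range.mp hk) j, mul_zero]

lemma lidL_eval_one (n : ℕ) : ∀ j, ((Polynomial.derivative^[2 * j] (lidL n)).eval 1)
    = if j = n then 1 else 0 := by
  induction n using Nat.strong_induction_on with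
  | _ n ih =>
    intro j
    rw [lidL_def, Polynomial.iterate_derivative_sub, Polynomial.eval_sub, iter_eval_one,
      Polynomial.iterate_derivative_sum, Polynomial.eval_finset_sum]
    have hsum : (∑ k ∈ Finset.range n, ((Polynomial.derivative^[2 * j]
          (Polynomial.C ((((2 * (n - k) + 1).factorial : ℕ) : ℂ))⁻¹ * lidL k)).eval 1))
        = if j ∈ Finset.range n then ((((2 * (n - j) + 1).factorial : ℕ) : ℂ))⁻¹ else 0 := by
      rw [Finset.sum_congr rfl (fun k hk => by
        rw [Polynomial.iterate_derivative_C_mul, Polynomial.eval_mul, Polynomial.eval_C,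
          ih k (Finset.mem_range.mp hk) j, mul_ite, mul_one, mul_zero])]
      exact Finset.sum_ite_eq (Finset.range n) j _
    rw [hsum]
    rcases lt_trichotomy j n with h | h | h
    · simp [Finset.mem_range.mpr h, h.le, h.ne]
    · subst h; simp
    · have : ¬ j ≤ n := by omega
      have h1 : ¬ j < n := by omega
      have h2 : j ≠ n := by omega
      simp [this, Finset.mem_range, h1, h2]

lemma poly_zero_of_lidstone (D : Polynomial ℂ)
    (h0 : ∀ j, ((Polynomial.derivative^[2 * j] D).eval 0) = 0)
    (h1 : ∀ j, ((Polynomial.derivative^[2 * j] D).eval 1) = 0) : D = 0 := by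
  generalize hd : D.natDegree = d
  induction d using Nat.strong_induction_on generalizing D with
  | _ d ih =>
    by_cases hle : D.natDegree ≤ 1
    · obtain ⟨a, b, hab⟩ := Polynomial.exists_eq_X_add_C_of_natDegree_le_one hle
      have e0 := h0 0
      have e1 := h1 0
      simp only [mul_zero, Function.iterate_zero, id_eq, hab, Polynomial.eval_add,
        Polynomial.eval_mul, Polynomial.eval_C, Polynomial.eval_X, mul_zero, zero_add,
        mul_one] at e0 e1
      have ha : a = 0 := by rw [e0, add_zero] at e1; exact e1
      rw [hab, ha, e0]; simp
    · -- D'' satisfies the hypotheses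
      have hD2 : Polynomial.derivative (Polynomial.derivative D) = 0 := by
        have hdeg : (Polynomial.derivative (Polynomial.derivative D)).natDegree < d := by
          have l1 : D.natDegree ≠ 0 := by omega
          have h1' := Polynomial.natDegree_derivative_lt l1
          rcases eq_or_ne (Polynomial.derivative D).natDegree 0 with hz | hz
          · have := Polynomial.natDegree_derivative_le (Polynomial.derivative D)
            omega
          · have h2' := Polynomial.natDegree_derivative_lt hz
            omega
        refine ih _ hdeg _ (fun j => ?_) (fun j => ?_) rfl
        · have := h0 (j + 1)
          rwa [show 2 * (j + 1) = 2 * j + 2 by ring, Function.iterate_add_apply] at this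
        · have := h1 (j + 1)
          rwa [show 2 * (j + 1) = 2 * j + 2 by ring, Function.iterate_add_apply] at this
      have hd1 : (Polynomial.derivative D).natDegree = 0 :=
        Polynomial.natDegree_eq_zero_of_derivative_eq_zero hD2
      have : D.natDegree ≤ 1 := by
        rw [Polynomial.natDegree_le_iff_coeff_eq_zero]
        intro m hm
        have hc := Polynomial.coeff_derivative D (m - 1)
        have hz : (Polynomial.derivative D).coeff (m - 1) = 0 :=
          Polynomial.coeff_eq_zero_of_natDegree_lt (by omega)
        rw [hz, show m - 1 + 1 = m by omega] at hc
        have hfac : ((m - 1 : ℕ) : ℂ) + 1 ≠ 0 := by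
          have e : ((m - 1 : ℕ) : ℂ) + 1 = ((m - 1 + 1 : ℕ) : ℂ) := by push_cast; ring
          rw [e]
          exact Nat.cast_ne_zero.mpr (by omega)
        exact (mul_eq_zero.mp hc.symm).resolve_right hfac
      exact absurd this hle

noncomputable def Hf : ℂ → ℂ := dslope Complex.sinh 0

lemma Hf_zero : Hf 0 = 1 := by
  rw [Hf, dslope_same, Complex.deriv_sinh]
  exact Complex.cosh_zero

lemma Hf_of_ne {ζ : ℂ} (h : ζ ≠ 0) : Hf ζ = Complex.sinh ζ / ζ := by
  rw [Hf, dslope_of_ne _ h, slope_def_field, Complex.sinh_zero, sub_zero, sub_zero]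

lemma mul_Hf (ζ : ℂ) : ζ * Hf ζ = Complex.sinh ζ := by
  rcases eq_or_ne ζ 0 with rfl | h
  · simp
  · rw [Hf_of_ne h]; field_simp

lemma Hf_diff : Differentiable ℂ Hf := by
  have : DifferentiableOn ℂ Hf Set.univ := by
    rw [Hf, Complex.differentiableOn_dslope (Filter.univ_mem)]
    exact Complex.differentiable_sinh.differentiableOn
  exact (differentiableOn_univ).mp this

lemma sinh_ne_zero_of {ζ : ℂ} (h0 : ζ ≠ 0) (hπ : ‖ζ‖ < π) : Complex.sinh ζ ≠ 0 := by
  intro hs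
  have : Complex.sin (ζ * Complex.I) = 0 := by rw [Complex.sin_mul_I, hs, zero_mul]
  obtain ⟨k, hk⟩ := Complex.sin_eq_zero_iff.mp this
  have hnorm : ‖ζ * Complex.I‖ = ‖ζ‖ := by simp
  rw [hk] at hnorm
  have : |(k : ℝ)| * π = ‖ζ‖ := by
    simpa [abs_of_nonneg Real.pi_pos.le, Complex.norm_intCast] using hnorm
  have hk0 : k = 0 := by
    by_contra hkne
    have : (1 : ℝ) ≤ |(k : ℝ)| := by exact_mod_cast Int.one_le_abs (by omega)
    nlinarith [Real.pi_pos]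
  rw [hk0] at hk
  simp only [Int.cast_zero, zero_mul] at hk
  rcases mul_eq_zero.mp hk with h | h
  · exact h0 h
  · exact Complex.I_ne_zero h

lemma Hf_ne_zero {ζ : ℂ} (hπ : ‖ζ‖ < π) : Hf ζ ≠ 0 := by
  rcases eq_or_ne ζ 0 with rfl | h
  · rw [Hf_zero]; exact one_ne_zero
  · rw [Hf_of_ne h]
    exact div_ne_zero (sinh_ne_zero_of h hπ) h

noncomputable def gfun (z ζ : ℂ) : ℂ := z * Hf (z * ζ) / Hf ζ

lemma gfun_mul_sinh (z ζ : ℂ) (hπ : ‖ζ‖ < π) :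
    gfun z ζ * Complex.sinh ζ = Complex.sinh (ζ * z) := by
  have h1 : Complex.sinh (ζ * z) = (z * ζ) * Hf (z * ζ) := by rw [mul_comm ζ z, ← mul_Hf (z * ζ)]
  have h2 : Complex.sinh ζ = ζ * Hf ζ := (mul_Hf ζ).symm
  rw [gfun, h1, h2]
  field_simp [Hf_ne_zero hπ]

lemma gfun_diff (z : ℂ) {R : ℝ} (hR : R < π) :
    DifferentiableOn ℂ (gfun z) (Metric.closedBall 0 R) := by
  apply DifferentiableOn.div
  · exact ((differentiable_const z).mul
      (Hf_diff.comp ((differentiable_const z).mul differentiable_id))).differentiableOn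
  · exact Hf_diff.differentiableOn
  · intro x hx
    apply Hf_ne_zero
    have := Metric.mem_closedBall.mp hx
    rw [dist_zero_right] at this; linarith

lemma coeffs_eq_zero {a : ℕ → ℂ} {r : ℝ} (hr : 0 < r)
    (hsum : ∀ ζ : ℂ, ‖ζ‖ < r → HasSum (fun n => a n * ζ ^ n) 0) : ∀ n, a n = 0 := by
  set p := FormalMultilinearSeries.ofScalars ℂ a with hp
  have happ : ∀ (y : ℂ) (n : ℕ), (p n fun _ => y) = a n * y ^ n := by
    intro y n
    rw [hp, FormalMultilinearSeries.ofScalars_apply_eq, smul_eq_mul]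
  have hsummable : Summable fun n => ‖p n‖ * ((r / 2 : ℝ).toNNReal : ℝ) ^ n := by
    have h2 : ‖(((r / 2 : ℝ)) : ℂ)‖ = r / 2 := by
      rw [Complex.norm_real, Real.norm_of_nonneg (by linarith)]
    have := ((hsum (((r / 2 : ℝ)) : ℂ) (by rw [h2]; linarith)).summable)
    have hn : Summable fun n => ‖a n * (((r / 2 : ℝ)) : ℂ) ^ n‖ := (summable_norm_iff.mpr this)
    apply hn.congr
    intro n
    rw [norm_mul, norm_pow, h2, FormalMultilinearSeries.ofScalars_norm,
      Real.coe_toNNReal _ (by linarith)]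
  have hrad : (0 : ENNReal) < p.radius := by
    refine lt_of_lt_of_le ?_ (p.le_radius_of_summable (r := (r / 2 : ℝ).toNNReal) hsummable)
    exact_mod_cast Real.toNNReal_pos.mpr (by linarith)
  have hball := p.hasFPowerSeriesOnBall hrad
  have hAt := hball.hasFPowerSeriesAt
  have heq : p.sum =ᶠ[𝓝 (0 : ℂ)] (fun _ => (0 : ℂ)) := by
    filter_upwards [Metric.ball_mem_nhds (0 : ℂ) hr] with y hy
    have hy' : ‖y‖ < r := by rwa [Metric.mem_ball, dist_zero_right] at hy
    have : p.sum y = ∑' n, a n * y ^ n := tsum_congr fun n => happ y n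
    rw [this, (hsum y hy').tsum_eq]
  have hzero : HasFPowerSeriesAt (fun _ => (0 : ℂ)) p 0 := hAt.congr heq
  have hp0 : p = 0 := hzero.eq_zero
  intro n
  have h1n := happ 1 n
  rw [one_pow, mul_one] at h1n
  have hc : p.coeff n = a n := h1n
  rw [← hc, hp0]
  simp [FormalMultilinearSeries.coeff]

noncomputable def oddSeries (w : ℂ) : ℕ → ℂ :=
  fun n => if Odd n then w ^ n * ((n.factorial : ℕ) : ℂ)⁻¹ else 0

lemma hasSum_oddSeries (w ζ : ℂ) :
    HasSum (fun n => oddSeries w n * ζ ^ n) (Complex.sinh (ζ * w)) := by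
  have h := Complex.hasSum_sinh (ζ * w)
  have hg : Function.Injective (fun k : ℕ => 2 * k + 1) := fun a b hab => by
    simpa using hab
  have hv : ∀ n ∉ Set.range (fun k : ℕ => 2 * k + 1), oddSeries w n * ζ ^ n = 0 := by
    intro n hn
    have hno : ¬ Odd n := by
      rintro ⟨k, hk⟩
      refine hn ⟨k, ?_⟩
      simp only
      omega
    simp [oddSeries, hno]
  refine (Function.Injective.hasSum_iff hg hv).mp ?_
  have heq : ((fun n => oddSeries w n * ζ ^ n) ∘ fun k : ℕ => 2 * k + 1)
      = fun k => (ζ * w) ^ (2 * k + 1) / (((2 * k + 1).factorial : ℕ) : ℂ) := by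
    funext k
    have hodd : Odd (2 * k + 1) := ⟨k, by omega⟩
    simp only [Function.comp_apply, oddSeries, if_pos hodd, mul_pow, div_eq_mul_inv]
    ring
  rw [heq]
  exact h

lemma summable_norm_oddSeries (w ζ : ℂ) :
    Summable fun n => ‖oddSeries w n * ζ ^ n‖ := by
  refine Summable.of_nonneg_of_le (fun n => norm_nonneg _) (fun n => ?_)
    (Real.summable_pow_div_factorial (‖ζ‖ * ‖w‖))
  by_cases h : Odd n
  · rw [norm_mul, norm_pow]
    simp only [oddSeries, if_pos h, norm_mul, norm_pow, norm_inv]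
    rw [Complex.norm_natCast]
    rw [mul_pow, div_eq_mul_inv]
    have : 0 ≤ (n.factorial : ℝ)⁻¹ := by positivity
    calc ‖w‖ ^ n * (n.factorial : ℝ)⁻¹ * ‖ζ‖ ^ n
        = ‖ζ‖ ^ n * ‖w‖ ^ n * (n.factorial : ℝ)⁻¹ := by ring
      _ ≤ ‖ζ‖ ^ n * ‖w‖ ^ n * (n.factorial : ℝ)⁻¹ := le_rfl
  · simp only [oddSeries, if_neg h, zero_mul, norm_zero]
    positivity

lemma sum_range_two_mul (f : ℕ → ℂ) (n : ℕ) :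
    ∑ k ∈ Finset.range (2 * n), f k
      = ∑ j ∈ Finset.range n, f (2 * j) + ∑ j ∈ Finset.range n, f (2 * j + 1) := by
  induction n with
  | zero => simp
  | succ m ih =>
    rw [show 2 * (m + 1) = 2 * m + 1 + 1 by ring, Finset.sum_range_succ, Finset.sum_range_succ,
      ih, Finset.sum_range_succ, Finset.sum_range_succ]
    ring

lemma key_s11 (z ζ : ℂ) (hπ : ‖ζ‖ < π) :
    HasSum (fun k : ℕ => (lidL k).eval z * ζ ^ (2 * k)) (gfun z ζ) := by
  set r : ℝ := (‖ζ‖ + π) / 2 with hrdef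
  have hr1 : ‖ζ‖ < r := by rw [hrdef]; linarith
  have hr2 : r < π := by rw [hrdef]; linarith
  have hr0 : 0 < r := lt_of_le_of_lt (norm_nonneg ζ) hr1
  set R : NNReal := r.toNNReal with hRdef
  have hRr : (R : ℝ) = r := Real.coe_toNNReal _ hr0.le
  have hR0 : 0 < R := Real.toNNReal_pos.mpr hr0
  have hdiff : DifferentiableOn ℂ (gfun z) (Metric.closedBall 0 (R : ℝ)) := by
    rw [hRr]; exact gfun_diff z hr2
  have hq := hdiff.hasFPowerSeriesOnBall hR0
  set q := cauchyPowerSeries (gfun z) 0 (R : ℝ) with hqdef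
  set Q : ℕ → ℂ := fun n => q.coeff n with hQdef
  have hQsum : ∀ y : ℂ, ‖y‖ < r → HasSum (fun n => Q n * y ^ n) (gfun z y) := by
    intro y hy
    have hmem : y ∈ Metric.eball (0 : ℂ) (R : ENNReal) := by
      rw [Metric.mem_eball, edist_zero_right]
      rw [show (‖y‖ₑ < (R : ENNReal)) ↔ ‖y‖₊ < R from ENNReal.coe_lt_coe]
      rw [← NNReal.coe_lt_coe, coe_nnnorm, hRr]
      exact hy
    have h := hq.hasSum hmem
    rw [zero_add] at h
    have heq : (fun n => q n fun _ => y) = fun n => Q n * y ^ n := by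
      funext n
      rw [FormalMultilinearSeries.apply_eq_pow_smul_coeff, smul_eq_mul, mul_comm]
    rwa [heq] at h
  have hQnorm : ∀ y : ℂ, ‖y‖ < r → Summable (fun n => ‖Q n * y ^ n‖) := by
    intro y hy
    have hlt : ((‖y‖₊ : NNReal) : ENNReal) < q.radius := by
      refine lt_of_lt_of_le ?_ hq.r_le
      rw [ENNReal.coe_lt_coe, ← NNReal.coe_lt_coe, coe_nnnorm, hRr]
      exact hy
    have hs := q.summable_norm_mul_pow hlt
    refine hs.congr fun n => ?_
    rw [norm_mul, norm_pow, FormalMultilinearSeries.norm_apply_eq_norm_coef, coe_nnnorm]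
  have hc : ∀ m : ℕ, (∑ kl ∈ Finset.HasAntidiagonal.antidiagonal m, Q kl.1 * oddSeries 1 kl.2)
      = oddSeries z m := by
    have hzero := coeffs_eq_zero
      (a := fun m => (∑ kl ∈ Finset.HasAntidiagonal.antidiagonal m, Q kl.1 * oddSeries 1 kl.2) - oddSeries z m)
      hr0 ?_
    · intro m
      exact sub_eq_zero.mp (hzero m)
    · intro y hy
      have hypi : ‖y‖ < π := lt_trans hy hr2
      have hf := hQnorm y hy
      have hg := summable_norm_oddSeries 1 y
      have hprod := tsum_mul_tsum_eq_tsum_sum_antidiagonal_of_summable_norm hf hg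
      have hL1 : (∑' n, Q n * y ^ n) = gfun z y := (hQsum y hy).tsum_eq
      have hL2 : (∑' n, oddSeries 1 n * y ^ n) = Complex.sinh y := by
        rw [(hasSum_oddSeries 1 y).tsum_eq, mul_one]
      rw [hL1, hL2, gfun_mul_sinh z y hypi] at hprod
      have hterm : ∀ n : ℕ, (∑ kl ∈ Finset.HasAntidiagonal.antidiagonal n,
            (Q kl.1 * y ^ kl.1) * (oddSeries 1 kl.2 * y ^ kl.2))
          = (∑ kl ∈ Finset.HasAntidiagonal.antidiagonal n, Q kl.1 * oddSeries 1 kl.2) * y ^ n := by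
        intro n
        rw [Finset.sum_mul]
        refine Finset.sum_congr rfl fun kl hkl => ?_
        have hn : kl.1 + kl.2 = n := Finset.HasAntidiagonal.mem_antidiagonal.mp hkl
        rw [← hn, pow_add]
        ring
      have hsummable : Summable fun n =>
          (∑ kl ∈ Finset.HasAntidiagonal.antidiagonal n, Q kl.1 * oddSeries 1 kl.2) * y ^ n := by
        have hsn := (summable_norm_sum_mul_antidiagonal_of_summable_norm hf hg).of_norm
        exact hsn.congr fun n => hterm n
      have h1 : HasSum (fun n =>
          (∑ kl ∈ Finset.HasAntidiagonal.antidiagonal n, Q kl.1 * oddSeries 1 kl.2) * y ^ n)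
          (Complex.sinh (y * z)) := by
        have ht := hsummable.hasSum
        have heqt : (∑' n, (∑ kl ∈ Finset.HasAntidiagonal.antidiagonal n, Q kl.1 * oddSeries 1 kl.2) * y ^ n)
            = Complex.sinh (y * z) := by
          rw [← tsum_congr hterm, ← hprod]
        rwa [heqt] at ht
      have h2 := hasSum_oddSeries z y
      simpa [sub_mul] using h1.sub h2
  have hQrec : ∀ n : ℕ, Q n
      = oddSeries z (n + 1) - ∑ k ∈ Finset.range n, Q k * oddSeries 1 (n + 1 - k) := by
    intro n
    have h := hc (n + 1)
    rw [Finset.Nat.sum_antidiagonal_eq_sum_range_succ_mk, Finset.sum_range_succ,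
      Finset.sum_range_succ] at h
    have h0 : oddSeries 1 (n + 1 - (n + 1)) = 0 := by
      simp [oddSeries]
    have h1 : oddSeries 1 (n + 1 - n) = 1 := by
      have : n + 1 - n = 1 := by omega
      rw [this]
      simp [oddSeries]
    rw [h0, h1, mul_zero, add_zero, mul_one] at h
    linear_combination h
  have hQ : ∀ n : ℕ, Q (2 * n) = (lidL n).eval z ∧ Q (2 * n + 1) = 0 := by
    intro n
    induction n using Nat.strong_induction_on with
    | _ n ih =>
      have heven : Q (2 * n) = (lidL n).eval z := by
        rw [hQrec (2 * n), sum_range_two_mul (fun k => Q k * oddSeries 1 (2 * n + 1 - k)) n]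
        have hev : ∀ j ∈ Finset.range n, Q (2 * j) * oddSeries 1 (2 * n + 1 - 2 * j)
            = ((((2 * (n - j) + 1).factorial : ℕ) : ℂ))⁻¹ * (lidL j).eval z := by
          intro j hj
          have hjn := Finset.mem_range.mp hj
          rw [(ih j hjn).1]
          have he : 2 * n + 1 - 2 * j = 2 * (n - j) + 1 := by omega
          have hodd : Odd (2 * (n - j) + 1) := ⟨n - j, by omega⟩
          rw [he]
          simp only [oddSeries, if_pos hodd, one_pow, one_mul]
          ring
        have hod : ∀ j ∈ Finset.range n, Q (2 * j + 1) * oddSeries 1 (2 * n + 1 - (2 * j + 1))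
            = 0 := by
          intro j hj
          rw [(ih j (Finset.mem_range.mp hj)).2, zero_mul]
        rw [Finset.sum_congr rfl hev, Finset.sum_congr rfl hod, Finset.sum_const_zero, add_zero]
        have hoz : oddSeries z (2 * n + 1) = z ^ (2 * n + 1) * ((((2 * n + 1).factorial : ℕ) : ℂ))⁻¹ := by
          have hodd : Odd (2 * n + 1) := ⟨n, by omega⟩
          simp only [oddSeries, if_pos hodd]
        rw [hoz, lidL_def]
        simp only [Polynomial.eval_sub, Polynomial.eval_mul, Polynomial.eval_C,
          Polynomial.eval_pow, Polynomial.eval_X, Polynomial.eval_finset_sum]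
        ring
      have hodd : Q (2 * n + 1) = 0 := by
        rw [hQrec (2 * n + 1), Finset.sum_range_succ,
          sum_range_two_mul (fun k => Q k * oddSeries 1 (2 * n + 1 + 1 - k)) n]
        have hz1 : oddSeries z (2 * n + 1 + 1) = 0 := by
          have : ¬ Odd (2 * n + 2) := by simp [Nat.odd_iff]
          simp [oddSeries, show 2*n+1+1 = 2*n+2 by omega, this]
        have hev : ∀ j ∈ Finset.range n, Q (2 * j) * oddSeries 1 (2 * n + 1 + 1 - 2 * j) = 0 := by
          intro j hj
          have hjn := Finset.mem_range.mp hj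
          have he : 2 * n + 1 + 1 - 2 * j = 2 * (n - j + 1) := by omega
          have : ¬ Odd (2 * (n - j + 1)) := by simp [Nat.odd_iff]
          rw [he]
          simp [oddSeries, this]
        have hod : ∀ j ∈ Finset.range n, Q (2 * j + 1) * oddSeries 1 (2 * n + 1 + 1 - (2 * j + 1)) = 0 := by
          intro j hj
          rw [(ih j (Finset.mem_range.mp hj)).2, zero_mul]
        have hlast : Q (2 * n) * oddSeries 1 (2 * n + 1 + 1 - 2 * n) = 0 := by
          have he : 2 * n + 1 + 1 - 2 * n = 2 := by omega
          have : ¬ Odd 2 := by decide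
          rw [he]
          simp [oddSeries, this]
        rw [Finset.sum_congr rfl hev, Finset.sum_congr rfl hod, hlast, hz1,
          Finset.sum_const_zero]
        simp
      exact ⟨heven, hodd⟩
  have h := hQsum ζ hr1
  have hg2 : Function.Injective (fun k : ℕ => 2 * k) := fun a b hab => by simpa using hab
  have hv2 : ∀ n ∉ Set.range (fun k : ℕ => 2 * k), Q n * ζ ^ n = 0 := by
    intro n hn
    have hodd : Odd n := by
      rcases Nat.even_or_odd n with he | ho
      · obtain ⟨m, hm⟩ := he
        exact absurd ⟨m, by simp only; omega⟩ hn
      · exact ho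
    obtain ⟨m, hm⟩ := hodd
    rw [show n = 2 * m + 1 by omega, (hQ m).2, zero_mul]
  have h2 := (Function.Injective.hasSum_iff hg2 hv2).mpr h
  have heq2 : ((fun n => Q n * ζ ^ n) ∘ fun k : ℕ => 2 * k)
      = fun k => (lidL k).eval z * ζ ^ (2 * k) := by
    funext k
    simp only [Function.comp_apply, (hQ k).1]
  rwa [heq2] at h2

lemma exp_sinh_identity (z ζ : ℂ) :
    Complex.exp (ζ * z) * Complex.sinh ζ
      = Complex.sinh (ζ * (1 - z)) + Complex.exp ζ * Complex.sinh (ζ * z) := by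
  simp only [Complex.sinh, mul_sub, mul_one]
  simp only [Complex.exp_sub, Complex.exp_neg]
  field_simp [Complex.exp_ne_zero]
  ring

/-- **Expansion of the exponential.** For `z ∈ ℂ` and `0 < |ζ| < π`,
`e^{ζz} = Σ_k Λ_{2k,0}(z)·ζ^{2k} + e^{ζ}·Σ_k Λ_{2k,1}(z)·ζ^{2k}`, both series being
convergent, where `Λ_{2k,0}(z) = Λ_{2k,1}(1 − z)`. -/
theorem lidstone_expansion_of_exp (Λ : ℕ → Polynomial ℂ)
    (hΛ0 : ∀ k j : ℕ, (Polynomial.derivative^[2 * j] (Λ k)).eval 0 = 0)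
    (hΛ1 : ∀ k j : ℕ,
      (Polynomial.derivative^[2 * j] (Λ k)).eval 1 = if j = k then 1 else 0) :
    ∀ z ζ : ℂ, 0 < ‖ζ‖ → ‖ζ‖ < π →
      Summable (fun k : ℕ => (Λ k).eval (1 - z) * ζ ^ (2 * k)) ∧
      Summable (fun k : ℕ => (Λ k).eval z * ζ ^ (2 * k)) ∧
      Complex.exp (ζ * z) =
        (∑' k : ℕ, (Λ k).eval (1 - z) * ζ ^ (2 * k)) +
          Complex.exp ζ * (∑' k : ℕ, (Λ k).eval z * ζ ^ (2 * k)) := by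
  intro z ζ h0 hπ
  have hL : ∀ k, Λ k = lidL k := by
    intro k
    have hz := poly_zero_of_lidstone (Λ k - lidL k)
      (fun j => by
        rw [Polynomial.iterate_derivative_sub, Polynomial.eval_sub, hΛ0, lidL_eval_zero, sub_zero])
      (fun j => by
        rw [Polynomial.iterate_derivative_sub, Polynomial.eval_sub, hΛ1, lidL_eval_one, sub_self])
    exact sub_eq_zero.mp hz
  have h1 := key_s11 (1 - z) ζ hπ
  have h2 := key_s11 z ζ hπ
  have hζ0 : ζ ≠ 0 := by
    intro h
    rw [h] at h0
    simp at h0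
  have hsinh : Complex.sinh ζ ≠ 0 := sinh_ne_zero_of hζ0 hπ
  have hm1 : gfun (1 - z) ζ * Complex.sinh ζ = Complex.sinh (ζ * (1 - z)) := gfun_mul_sinh _ _ hπ
  have hm2 : gfun z ζ * Complex.sinh ζ = Complex.sinh (ζ * z) := gfun_mul_sinh _ _ hπ
  have hexp : Complex.exp (ζ * z) = gfun (1 - z) ζ + Complex.exp ζ * gfun z ζ := by
    have hh := exp_sinh_identity z ζ
    rw [← hm1, ← hm2] at hh
    apply mul_right_cancel₀ hsinh
    rw [add_mul]
    linear_combination hh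
  refine ⟨?_, ?_, ?_⟩
  · simp only [hL]
    exact h1.summable
  · simp only [hL]
    exact h2.summable
  · simp only [hL]
    rw [h1.tsum_eq, h2.tsum_eq]
    exact hexp
end

section
/- For every integer k ≥ 0 and every z ∈ ℂ, the Lidstone polynomial satisfies Λ_{2k,1}(z) = (2^{2k+1}/(2k+1)!)·B_{2k+1}((1+z)/2), where B_n denotes the n-th Bernoulli polynomial. -/
open Polynomial

/-- Reflection formula for Bernoulli polynomials over ℚ. -/
lemma my_bernoulli_comp_one_sub (n : ℕ) :
    (Polynomial.bernoulli n).comp (1 - X) = C ((-1 : ℚ) ^ n) * Polynomial.bernoulli n := by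
  induction n with
  | zero => simp [Polynomial.bernoulli_zero]
  | succ n ih =>
    set p := (Polynomial.bernoulli (n + 1)).comp (1 - X) -
      C ((-1 : ℚ) ^ (n + 1)) * Polynomial.bernoulli (n + 1) with hp
    have hd : derivative p = 0 := by
      rw [hp, derivative_sub, derivative_comp, derivative_C_mul,
        Polynomial.derivative_bernoulli_add_one, mul_comp, add_comp, natCast_comp, one_comp, ih]
      have h1 : derivative (1 - X : ℚ[X]) = -1 := by simp
      rw [h1]
      simp only [pow_succ, map_mul, map_neg, map_one]
      ring
    have hdeg : p.natDegree = 0 := natDegree_eq_zero_of_derivative_eq_zero hd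
    have hpc : p = C (p.coeff 0) := eq_C_of_natDegree_eq_zero hdeg
    have he : p.eval 0 = 0 := by
      rw [hp]
      simp only [eval_sub, eval_comp, eval_sub, eval_one, eval_X, sub_zero, eval_mul, eval_C]
      rw [Polynomial.bernoulli_eval_one, Polynomial.bernoulli_eval_zero,
        bernoulli'_eq_bernoulli]
      ring
    have : p = 0 := by
      rw [hpc] at he ⊢
      simpa using he
    have := sub_eq_zero.mp (hp ▸ this)
    exact this

lemma my_bernoulli_eval_half (n : ℕ) (hn : Odd n) :
    (Polynomial.bernoulli n).eval (1 / 2 : ℚ) = 0 := by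
  have h := congrArg (Polynomial.eval (1 / 2 : ℚ)) (my_bernoulli_comp_one_sub n)
  rw [eval_comp] at h
  simp only [eval_sub, eval_one, eval_X, eval_mul, eval_C] at h
  norm_num at h
  rw [hn.neg_one_pow] at h
  linarith

/-- Bernoulli polynomial mapped to ℂ. -/
noncomputable def Bc (n : ℕ) : Polynomial ℂ :=
  (Polynomial.bernoulli n).map (algebraMap ℚ ℂ)

noncomputable def Lin : Polynomial ℂ := C (1/2 : ℂ) + C (1/2 : ℂ) * X

lemma Bc_eval_eq (n : ℕ) (w : ℂ) :
    (Bc n).eval w = Polynomial.aeval w (Polynomial.bernoulli n) := by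
  rw [Bc, eval_map, aeval_def]

lemma Bc_eval_half (n : ℕ) (hn : Odd n) : (Bc n).eval (1/2 : ℂ) = 0 := by
  have h : ((1:ℂ)/2) = algebraMap ℚ ℂ (1/2) := by norm_num
  rw [Bc, h, eval_map, eval₂_at_apply, my_bernoulli_eval_half n hn, map_zero]

lemma Bc_eval_one (n : ℕ) : (Bc n).eval 1 = algebraMap ℚ ℂ (bernoulli' n) := by
  have h : ((1:ℂ)) = algebraMap ℚ ℂ 1 := by norm_num
  rw [Bc, h, eval_map, eval₂_at_apply, Polynomial.bernoulli_eval_one]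

lemma derivative_Bc (n : ℕ) :
    derivative (Bc n) = C (n : ℂ) * Bc (n - 1) := by
  rw [Bc, derivative_map, Polynomial.derivative_bernoulli]
  rw [Polynomial.map_mul, Polynomial.map_natCast, Bc, C_eq_natCast]

lemma iter_deriv_BcL (n : ℕ) : ∀ m ≤ n,
    derivative^[m] ((Bc n).comp Lin) =
      C ((n.descFactorial m : ℂ) * (1/2 : ℂ)^m) * (Bc (n - m)).comp Lin := by
  intro m
  induction m with
  | zero => intro _; simp
  | succ m ih =>
    intro hm
    rw [Function.iterate_succ_apply', ih (by omega), derivative_C_mul, derivative_comp,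
      derivative_Bc]
    have hL : derivative Lin = C (1/2 : ℂ) := by simp [Lin]
    rw [hL, mul_comp, C_comp]
    have harith : ((n.descFactorial (m+1) : ℂ)) * (1/2 : ℂ)^(m+1)
        = (n.descFactorial m : ℂ) * (1/2)^m * ((1/2) * ((n - m : ℕ) : ℂ)) := by
      rw [Nat.descFactorial_succ]
      push_cast
      ring
    rw [show n - m - 1 = n - (m+1) by omega] at *
    rw [harith]
    simp only [map_mul]
    ring

lemma iter_deriv_BcL_zero (n m : ℕ) (hm : n < m) :
    derivative^[m] ((Bc n).comp Lin) = 0 := by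
  have base : derivative^[n+1] ((Bc n).comp Lin) = 0 := by
    rw [Function.iterate_succ_apply', iter_deriv_BcL n n le_rfl]
    have : Bc (n - n) = 1 := by
      simp [Bc, Nat.sub_self, Polynomial.bernoulli_zero]
    rw [this, one_comp, mul_one, derivative_C]
  have : m = (m - (n+1)) + (n+1) := by omega
  rw [this, Function.iterate_add_apply, base]
  simp

/-- candidate polynomial -/
noncomputable def Pk (k : ℕ) : Polynomial ℂ :=
  C ((2:ℂ) ^ (2*k+1) / (Nat.factorial (2*k+1) : ℂ)) * (Bc (2*k+1)).comp Lin

lemma Pk_eval (k : ℕ) (z : ℂ) :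
    (Pk k).eval z = (2 ^ (2 * k + 1) / (Nat.factorial (2 * k + 1) : ℂ)) *
      Polynomial.aeval ((1 + z) / 2) (Polynomial.bernoulli (2 * k + 1)) := by
  rw [Pk, eval_mul, eval_C, eval_comp]
  have : Lin.eval z = (1 + z) / 2 := by simp [Lin]; ring
  rw [this, Bc_eval_eq]

lemma Pk_deriv0 (k j : ℕ) : (derivative^[2*j] (Pk k)).eval 0 = 0 := by
  rw [Pk, iterate_derivative_C_mul]
  by_cases h : 2*j ≤ 2*k+1
  · rw [iter_deriv_BcL _ _ h]
    have hL0 : Lin.eval 0 = (1/2 : ℂ) := by simp [Lin]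
    rw [eval_mul, eval_mul, eval_comp, hL0, Bc_eval_half _ ⟨k - j, by omega⟩]
    ring
  · rw [iter_deriv_BcL_zero _ _ (by omega)]
    simp

lemma Pk_deriv1 (k j : ℕ) :
    (derivative^[2*j] (Pk k)).eval 1 = if j = k then 1 else 0 := by
  rw [Pk, iterate_derivative_C_mul]
  rcases lt_trichotomy j k with hjk | rfl | hjk
  · rw [iter_deriv_BcL _ _ (by omega)]
    have hL1 : Lin.eval 1 = (1 : ℂ) := by simp [Lin]; ring
    rw [eval_mul, eval_mul, eval_comp, hL1, Bc_eval_one]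
    rw [bernoulli'_eq_zero_of_odd ⟨k - j, by omega⟩ (by omega)]
    simp [Nat.ne_of_lt hjk]
  · rw [iter_deriv_BcL _ _ (by omega)]
    have hL1 : Lin.eval 1 = (1 : ℂ) := by simp [Lin]; ring
    rw [eval_mul, eval_mul, eval_comp, hL1]
    rw [show 2*j+1 - 2*j = 1 by omega, Bc_eval_one, bernoulli'_one]
    have hdesc : ((2*j+1).descFactorial (2*j) : ℂ) = (Nat.factorial (2*j+1) : ℂ) := by
      have := Nat.factorial_mul_descFactorial (show 2*j ≤ 2*j+1 by omega)
      rw [show 2*j+1 - 2*j = 1 by omega, Nat.factorial_one, one_mul] at this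
      exact_mod_cast congrArg (Nat.cast : ℕ → ℂ) this
    rw [eval_C, hdesc]
    have hfac : ((Nat.factorial (2*j+1) : ℂ)) ≠ 0 := by
      exact_mod_cast Nat.factorial_ne_zero (2*j+1)
    have h2 : ((1:ℂ)/2)^(2*j) = 1 / 2^(2*j) := by rw [div_pow, one_pow]
    simp only [if_pos rfl]
    have : algebraMap ℚ ℂ ((1:ℚ)/2) = 1/2 := by norm_num
    rw [this, h2, pow_succ]
    field_simp
    rw [eval_C, if_pos trivial]
    field_simp
  · rw [iter_deriv_BcL_zero _ _ (by omega)]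
    simp [Nat.ne_of_gt hjk]

/-- uniqueness: all even derivatives vanish at 0 and 1 ⇒ zero polynomial -/
lemma even_derivs_zero : ∀ (n : ℕ) (Q : Polynomial ℂ), Q.natDegree ≤ n →
    (∀ j, (derivative^[2*j] Q).eval 0 = 0) →
    (∀ j, (derivative^[2*j] Q).eval 1 = 0) → Q = 0 := by
  intro n
  induction n using Nat.strong_induction_on with
  | _ n ih =>
    intro Q hdeg h0 h1
    have hlin : Q.natDegree ≤ 1 → Q = 0 := by
      intro h
      have hQ := eq_X_add_C_of_natDegree_le_one h
      have e0 := h0 0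
      have e1 := h1 0
      simp only [Nat.mul_zero, Function.iterate_zero_apply] at e0 e1
      rw [hQ] at e0 e1 ⊢
      simp at e0 e1
      rw [e0] at e1 ⊢
      simp at e1
      simp [e1]
    rcases le_or_gt n 1 with hn | hn
    · exact hlin (hdeg.trans hn)
    · have hQ2 : derivative^[2] Q = 0 := by
        apply ih (n - 2) (by omega)
        · calc (derivative^[2] Q).natDegree ≤ Q.natDegree - 2 :=
                natDegree_iterate_derivative Q 2
            _ ≤ n - 2 := by omega
        · intro j
          rw [← Function.iterate_add_apply, show 2*j + 2 = 2*(j+1) by ring]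
          exact h0 (j+1)
        · intro j
          rw [← Function.iterate_add_apply, show 2*j + 2 = 2*(j+1) by ring]
          exact h1 (j+1)
      apply hlin
      by_contra hc
      push_neg at hc
      have hd2 : derivative (derivative Q) = 0 := by
        have : derivative^[2] Q = derivative (derivative Q) := by
          simp [Function.iterate_succ_apply']
        rwa [← this]
      have hdQ : (derivative Q).natDegree = 0 := natDegree_eq_zero_of_derivative_eq_zero hd2
      have hco : (derivative Q).coeff (Q.natDegree - 1) = 0 :=
        coeff_eq_zero_of_natDegree_lt (by omega)
      rw [coeff_derivative] at hco
      rw [show Q.natDegree - 1 + 1 = Q.natDegree by omega] at hco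
      have hlead : Q.coeff Q.natDegree = 0 := by
        have hne : ((Q.natDegree - 1 : ℕ) : ℂ) + 1 ≠ 0 := by
          have h3 : ((Q.natDegree - 1 : ℕ) : ℂ) + 1 = ((Q.natDegree - 1 + 1 : ℕ) : ℂ) := by
            push_cast; ring
          rw [h3]
          exact Nat.cast_ne_zero.mpr (by omega)
        exact (mul_eq_zero.mp hco).resolve_right hne
      have hz : Q = 0 := leadingCoeff_eq_zero.mp hlead
      rw [hz] at hc
      simp at hc

/-- **Relation with Bernoulli polynomials.** For every `k ≥ 0` and `z ∈ ℂ`,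
`Λ_{2k,1}(z) = (2^{2k+1}/(2k+1)!)·B_{2k+1}((1+z)/2)`, where `B_n` is the `n`-th
Bernoulli polynomial (generating function `Σ_n B_n(x) t^n/n! = t e^{tx}/(e^t − 1)`). -/
theorem lidstone_eq_bernoulli (Λ : ℕ → Polynomial ℂ)
    (hΛ0 : ∀ k j : ℕ, (Polynomial.derivative^[2 * j] (Λ k)).eval 0 = 0)
    (hΛ1 : ∀ k j : ℕ,
      (Polynomial.derivative^[2 * j] (Λ k)).eval 1 = if j = k then 1 else 0) :
    ∀ (k : ℕ) (z : ℂ),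
      (Λ k).eval z =
        (2 ^ (2 * k + 1) / (Nat.factorial (2 * k + 1) : ℂ)) *
          Polynomial.aeval ((1 + z) / 2) (Polynomial.bernoulli (2 * k + 1)) := by
  intro k z
  have hQ : Λ k - Pk k = 0 := by
    apply even_derivs_zero (Λ k - Pk k).natDegree _ le_rfl
    · intro j
      rw [Polynomial.iterate_derivative_sub, Polynomial.eval_sub, hΛ0 k j, Pk_deriv0 k j, sub_zero]
    · intro j
      rw [Polynomial.iterate_derivative_sub, Polynomial.eval_sub, hΛ1 k j, Pk_deriv1 k j, sub_self]
  have h : Λ k = Pk k := sub_eq_zero.mp hQ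
  rw [h, Pk_eval]
end

section
/- For every integer k ≥ 0 and every z ∈ ℂ, the Lidstone polynomial satisfies Λ_{2k,1}(z+1) − Λ_{2k,1}(z−1) = 2·z^{2k}/(2k)!. -/
open Polynomial

private lemma iter_deriv_comp_add (p : Polynomial ℂ) (a : ℂ) (n : ℕ) :
    derivative^[n] (p.comp (X + C a)) = (derivative^[n] p).comp (X + C a) := by
  induction n with
  | zero => simp
  | succ n ih =>
    rw [Function.iterate_succ_apply', ih, Function.iterate_succ_apply',
      derivative_comp]
    simp

private lemma even_coeff_zero (p : Polynomial ℂ)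
    (h : ∀ j : ℕ, (derivative^[2 * j] p).eval 0 = 0) (m : ℕ) :
    p.coeff (2 * m) = 0 := by
  have := h m
  rw [← coeff_zero_eq_eval_zero, coeff_iterate_derivative, zero_add,
    Nat.descFactorial_self, nsmul_eq_mul] at this
  have hf : ((2 * m).factorial : ℂ) ≠ 0 := Nat.cast_ne_zero.mpr (Nat.factorial_ne_zero _)
  exact (mul_eq_zero.mp this).resolve_left hf

private lemma odd_eval (p : Polynomial ℂ)
    (h : ∀ m : ℕ, p.coeff (2 * m) = 0) (x : ℂ) :
    p.eval (-x) = -p.eval x := by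
  rw [eval_eq_sum_range, eval_eq_sum_range, ← Finset.sum_neg_distrib]
  refine Finset.sum_congr rfl fun i _ => ?_
  rcases Nat.even_or_odd i with he | ho
  · obtain ⟨m, rfl⟩ := he
    rw [← two_mul, h m]; ring
  · obtain ⟨m, rfl⟩ := ho
    rw [neg_pow, Odd.neg_one_pow ⟨m, by ring⟩]; ring

private lemma even_eval (p : Polynomial ℂ)
    (h : ∀ m : ℕ, p.coeff (2 * m + 1) = 0) (x : ℂ) :
    p.eval (-x) = p.eval x := by
  rw [eval_eq_sum_range, eval_eq_sum_range]
  refine Finset.sum_congr rfl fun i _ => ?_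
  rcases Nat.even_or_odd i with he | ho
  · obtain ⟨m, rfl⟩ := he
    rw [← two_mul, neg_pow, Even.neg_one_pow ⟨m, by ring⟩]; ring
  · obtain ⟨m, rfl⟩ := ho
    rw [h m]; ring

/-- For every `k ≥ 0` and `z ∈ ℂ`, `Λ_{2k,1}(z+1) − Λ_{2k,1}(z−1) = 2·z^{2k}/(2k)!`. -/
theorem lidstone_difference_equation (Λ : ℕ → Polynomial ℂ)
    (hΛ0 : ∀ k j : ℕ, (Polynomial.derivative^[2 * j] (Λ k)).eval 0 = 0)
    (hΛ1 : ∀ k j : ℕ,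
      (Polynomial.derivative^[2 * j] (Λ k)).eval 1 = if j = k then 1 else 0) :
    ∀ (k : ℕ) (z : ℂ),
      (Λ k).eval (z + 1) - (Λ k).eval (z - 1) =
        2 * z ^ (2 * k) / (Nat.factorial (2 * k) : ℂ) := by
  intro k z
  set P := Λ k with hP
  -- even coefficients of P vanish
  have hcoeff : ∀ m : ℕ, P.coeff (2 * m) = 0 := even_coeff_zero P (hΛ0 k)
  -- the polynomial Q := P(X+1) - P(X-1) - (2/(2k)!) X^(2k) is zero
  set c : ℂ := 2 / (Nat.factorial (2 * k) : ℂ) with hc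
  set Q : Polynomial ℂ := P.comp (X + C 1) - P.comp (X + C (-1)) - C c * X ^ (2 * k)
    with hQ
  have hQzero : Q = 0 := by
    ext n
    rw [coeff_zero]
    -- compute via n-th derivative at 0
    have hdn : (derivative^[n] Q).eval 0 = 0 := by
      have expand : derivative^[n] Q =
          (derivative^[n] P).comp (X + C 1) - (derivative^[n] P).comp (X + C (-1))
            - C c * ((Nat.descFactorial (2 * k) n : ℂ) • X ^ (2 * k - n)) := by
        rw [hQ, iterate_derivative_sub, iterate_derivative_sub,
          iter_deriv_comp_add, iter_deriv_comp_add, iterate_derivative_C_mul,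
          iterate_derivative_X_pow_eq_smul]
      rw [expand]
      simp only [eval_sub, eval_comp, eval_add, eval_X, eval_C, eval_mul, eval_smul,
        eval_pow, smul_eq_mul, zero_add]
      rcases Nat.even_or_odd n with he | ho
      · obtain ⟨j, rfl⟩ := he
        have h2j : j + j = 2 * j := by ring
        rw [h2j]
        have h1 : (derivative^[2 * j] P).eval 1 = if j = k then 1 else 0 := hΛ1 k j
        have hm1 : (derivative^[2 * j] P).eval (-1) = -(if j = k then 1 else 0) := by
          have hco : ∀ m : ℕ, (derivative^[2 * j] P).coeff (2 * m) = 0 := by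
            intro m
            rw [coeff_iterate_derivative, nsmul_eq_mul]
            have : 2 * m + 2 * j = 2 * (m + j) := by ring
            rw [this, hcoeff (m + j), mul_zero]
          have := odd_eval _ hco 1
          rw [this, h1]
        rw [h1, hm1]
        rcases eq_or_ne j k with rfl | hjk
        · have hx : (0 : ℂ) ^ (2 * j - 2 * j) = 1 := by
            rw [Nat.sub_self, pow_zero]
          rw [if_pos rfl, hx, Nat.descFactorial_self, hc]
          field_simp [Nat.cast_ne_zero.mpr (Nat.factorial_ne_zero (2 * j))]
          ring
        · rw [if_neg hjk]
          have : (Nat.descFactorial (2 * k) (2 * j) : ℂ) * (0 : ℂ) ^ (2 * k - 2 * j) = 0 := by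
            rcases lt_trichotomy j k with h | h | h
            · rw [zero_pow (by omega), mul_zero]
            · exact absurd h hjk
            · rw [Nat.descFactorial_eq_zero_iff_lt.mpr (by omega), Nat.cast_zero, zero_mul]
          rw [this]
          ring
      · obtain ⟨j, rfl⟩ := ho
        have hco : ∀ m : ℕ, (derivative^[2 * j + 1] P).coeff (2 * m + 1) = 0 := by
          intro m
          rw [coeff_iterate_derivative, nsmul_eq_mul]
          have : 2 * m + 1 + (2 * j + 1) = 2 * (m + j + 1) := by ring
          rw [this, hcoeff (m + j + 1), mul_zero]
        have heq := even_eval _ hco 1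
        rw [heq]
        have : (Nat.descFactorial (2 * k) (2 * j + 1) : ℂ) * (0 : ℂ) ^ (2 * k - (2 * j + 1)) = 0 := by
          rcases lt_or_ge (2 * j + 1) (2 * k) with h | h
          · rw [zero_pow (by omega), mul_zero]
          · have hne : 2 * k ≠ 2 * j + 1 := by omega
            rw [Nat.descFactorial_eq_zero_iff_lt.mpr (by omega), Nat.cast_zero, zero_mul]
        rw [this]
        ring
    rw [← coeff_zero_eq_eval_zero, coeff_iterate_derivative, zero_add,
      Nat.descFactorial_self, nsmul_eq_mul] at hdn
    exact (mul_eq_zero.mp hdn).resolve_left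
      (Nat.cast_ne_zero.mpr (Nat.factorial_ne_zero n))
  have := congrArg (fun q => Polynomial.eval z q) hQzero
  simp only [hQ, eval_sub, eval_comp, eval_add, eval_X, eval_C, eval_mul, eval_pow,
    eval_zero] at this
  have hz1 : z + (-1 : ℂ) = z - 1 := by ring
  rw [hz1] at this
  have hfin := sub_eq_zero.mp this
  rw [hP, hfin, hc]
  ring
end

section
/- Let f: ℂ → ℂ be an entire function, let τ ≥ 0 and C > 0 satisfy |f(z)| ≤ C·e^{τ|z|} for all z ∈ ℂ, and let F(ζ) = Σ_{n≥0} f^{(n)}(0)·ζ^{−n−1}, a series which converges absolutely for |ζ| > τ. Then for every real r > τ, every integer t ≥ 0 and every z ∈ ℂ, f^{(t)}(z) = (1/(2πi))·∮_{|ζ|=r} ζ^{t}·e^{ζz}·F(ζ) dζ, where the integral is taken counterclockwise over the circle of radius r centered at the origin. -/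
open Real

lemma factorial_aux (k : ℕ) :
    ((k+1).factorial : ℝ) ≤ ((k:ℝ)+1)^(k+2) * Real.exp (-(k:ℝ)) := by
  induction k with
  | zero => simp
  | succ k ih =>
    have hk2 : (0:ℝ) < (k:ℝ)+2 := by positivity
    have h1 : ((k:ℝ)+1)/((k:ℝ)+2) ≤ Real.exp (-(1/((k:ℝ)+2))) := by
      have h := Real.add_one_le_exp (-(1/((k:ℝ)+2)))
      have : ((k:ℝ)+1)/((k:ℝ)+2) = -(1/((k:ℝ)+2)) + 1 := by field_simp; ring
      linarith
    have h2 : (((k:ℝ)+1)/((k:ℝ)+2))^(k+2) ≤ Real.exp (-1) := by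
      calc (((k:ℝ)+1)/((k:ℝ)+2))^(k+2) ≤ (Real.exp (-(1/((k:ℝ)+2))))^(k+2) :=
            pow_le_pow_left₀ (by positivity) h1 _
        _ = Real.exp (-1) := by
            rw [← Real.exp_nat_mul]; congr 1; field_simp; push_cast; ring
    have h3 : ((k:ℝ)+1)^(k+2) ≤ ((k:ℝ)+2)^(k+2) * Real.exp (-1) := by
      have := mul_le_mul_of_nonneg_left h2 (le_of_lt (pow_pos hk2 (k+2)))
      rwa [div_pow, mul_div_assoc', mul_div_cancel_left₀] at this
      exact ne_of_gt (pow_pos hk2 (k+2))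
    have hfs : ((k+2).factorial : ℝ) = ((k:ℝ)+2) * ((k+1).factorial : ℝ) := by
      push_cast [Nat.factorial_succ]; ring
    calc ((k+2).factorial : ℝ) = ((k:ℝ)+2) * ((k+1).factorial : ℝ) := hfs
      _ ≤ ((k:ℝ)+2) * (((k:ℝ)+1)^(k+2) * Real.exp (-(k:ℝ))) := by
          apply mul_le_mul_of_nonneg_left ih (le_of_lt hk2)
      _ ≤ ((k:ℝ)+2) * (((k:ℝ)+2)^(k+2) * Real.exp (-1) * Real.exp (-(k:ℝ))) := by
          apply mul_le_mul_of_nonneg_left _ (le_of_lt hk2)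
          exact mul_le_mul_of_nonneg_right h3 (Real.exp_nonneg _)
      _ = ((k:ℝ)+2)^(k+3) * Real.exp (-((k:ℝ)+1)) := by
          rw [show -((k:ℝ)+1) = -1 + -(k:ℝ) by ring, Real.exp_add,
            show k+3 = (k+2)+1 from rfl, pow_succ]
          ring
      _ = (((k+1:ℕ):ℝ)+1) ^ ((k+1)+2) * Real.exp (-((k+1:ℕ):ℝ)) := by
          push_cast
          rw [show (k:ℝ)+1+1 = (k:ℝ)+2 by ring, show (k+1)+2 = k+3 from rfl]

lemma cauchy_bound {f : ℂ → ℂ} (hf : Differentiable ℂ f) {C τ : ℝ}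
    (hbound : ∀ z : ℂ, ‖f z‖ ≤ C * Real.exp (τ * ‖z‖))
    (n : ℕ) {s : ℝ} (hs : 0 < s) :
    ‖iteratedDeriv n f 0‖ ≤ C * Real.exp (τ * s) * n.factorial / s ^ n := by
  set p := cauchyPowerSeries f 0 s with hp
  have hps : HasFPowerSeriesOnBall f p 0 ⊤ := by
    have := hf.hasFPowerSeriesOnBall 0 (R := ⟨s, hs.le⟩) (by exact_mod_cast hs)
    exact this
  have h1 : n.factorial • (p n fun _ => (1:ℂ)) = iteratedDeriv n f 0 := by
    rw [iteratedDeriv_eq_iteratedFDeriv]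
    exact hps.factorial_smul 1 n
  have h2 : ‖iteratedDeriv n f 0‖ = n.factorial * ‖p n fun _ => (1:ℂ)‖ := by
    rw [← h1, ← Nat.cast_smul_eq_nsmul ℂ, norm_smul]
    simp
  have h3 : ‖p n fun _ => (1:ℂ)‖ ≤ ‖p n‖ := by
    have := (p n).le_opNorm fun _ => (1:ℂ)
    simpa using this
  have hC0 : 0 ≤ C := by
    have := (norm_nonneg (f 0)).trans (hbound 0)
    nlinarith [Real.exp_pos (τ * ‖(0:ℂ)‖)]
  have hint : (∫ θ in (0:ℝ)..2*π, ‖f (circleMap 0 s θ)‖) ≤ (2*π) * (C * Real.exp (τ*s)) := by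
    have hle : ∀ θ ∈ Set.Icc (0:ℝ) (2*π), ‖f (circleMap 0 s θ)‖ ≤ C * Real.exp (τ*s) := by
      intro θ _
      have h := hbound (circleMap 0 s θ)
      rwa [show ‖circleMap 0 s θ‖ = s by
        rw [norm_circleMap_zero, abs_of_pos hs]] at h
    have hi1 : IntervalIntegrable (fun θ => ‖f (circleMap 0 s θ)‖) MeasureTheory.volume 0 (2*π) :=
      ((hf.continuous.comp (continuous_circleMap 0 s)).norm).intervalIntegrable _ _
    calc (∫ θ in (0:ℝ)..2*π, ‖f (circleMap 0 s θ)‖)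
        ≤ ∫ _ in (0:ℝ)..2*π, C * Real.exp (τ*s) :=
          intervalIntegral.integral_mono_on Real.two_pi_pos.le hi1
            intervalIntegrable_const hle
      _ = (2*π) * (C * Real.exp (τ*s)) := by
          rw [intervalIntegral.integral_const, smul_eq_mul, sub_zero]
  have h4 : ‖p n‖ ≤ (C * Real.exp (τ*s)) * (s⁻¹)^n := by
    have := norm_cauchyPowerSeries_le f 0 s n
    rw [abs_of_pos hs] at this
    refine this.trans ?_
    apply mul_le_mul_of_nonneg_right _ (by positivity)
    calc (2*π)⁻¹ * ∫ θ in (0:ℝ)..2*π, ‖f (circleMap 0 s θ)‖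
        ≤ (2*π)⁻¹ * ((2*π) * (C * Real.exp (τ*s))) := by
          apply mul_le_mul_of_nonneg_left hint (by positivity)
      _ = C * Real.exp (τ*s) := by
          field_simp
  calc ‖iteratedDeriv n f 0‖ = n.factorial * ‖p n fun _ => (1:ℂ)‖ := h2
    _ ≤ n.factorial * ‖p n‖ := by
        apply mul_le_mul_of_nonneg_left h3 (by positivity)
    _ ≤ n.factorial * ((C * Real.exp (τ*s)) * (s⁻¹)^n) := by
        apply mul_le_mul_of_nonneg_left h4 (by positivity)
    _ = C * Real.exp (τ * s) * n.factorial / s ^ n := by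
        rw [inv_pow]
        field_simp

lemma factorial_le_exp (n : ℕ) (hn : 1 ≤ n) :
    (n.factorial : ℝ) ≤ (n:ℝ)^(n+1) * Real.exp 1 * Real.exp (-(n:ℝ)) := by
  obtain ⟨k, rfl⟩ := Nat.exists_eq_add_of_le hn
  have h := factorial_aux k
  have h2 : Real.exp (-(k:ℝ)) = Real.exp 1 * Real.exp (-((k:ℝ)+1)) := by
    rw [← Real.exp_add]; ring_nf
  calc ((1+k).factorial : ℝ) = ((k+1).factorial : ℝ) := by rw [Nat.add_comm]
    _ ≤ ((k:ℝ)+1)^(k+2) * Real.exp (-(k:ℝ)) := h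
    _ = ((1+k:ℕ):ℝ)^((1+k)+1) * Real.exp 1 * Real.exp (-((1+k:ℕ):ℝ)) := by
        rw [h2]; push_cast; ring_nf
lemma growth {f : ℂ → ℂ} (hf : Differentiable ℂ f) {C τ : ℝ}
    (hbound : ∀ z : ℂ, ‖f z‖ ≤ C * Real.exp (τ * ‖z‖)) (hC : 0 ≤ C)
    {σ : ℝ} (hσ0 : 0 < σ) (hστ : τ ≤ σ) (n : ℕ) (hn : 1 ≤ n) :
    ‖iteratedDeriv n f 0‖ ≤ C * Real.exp 1 * n * σ^n := by
  have hn0 : (0:ℝ) < n := by exact_mod_cast hn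
  have hs : 0 < (n:ℝ)/σ := by positivity
  have h := cauchy_bound hf hbound n hs
  refine h.trans ?_
  have he : Real.exp (τ * ((n:ℝ)/σ)) ≤ Real.exp (n:ℝ) := by
    apply Real.exp_le_exp.mpr
    calc τ*((n:ℝ)/σ) ≤ σ*((n:ℝ)/σ) := mul_le_mul_of_nonneg_right hστ hs.le
      _ = n := by field_simp
  have hfact := factorial_le_exp n hn
  have hexpn : Real.exp ((n:ℝ)) ≠ 0 := (Real.exp_pos _).ne'
  calc C * Real.exp (τ*((n:ℝ)/σ)) * n.factorial / ((n:ℝ)/σ)^n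
      ≤ C * Real.exp (n:ℝ) * ((n:ℝ)^(n+1) * Real.exp 1 * Real.exp (-(n:ℝ))) / ((n:ℝ)/σ)^n := by
        gcongr
    _ = C * Real.exp 1 * n * σ^n := by
        rw [Real.exp_neg, div_pow, pow_succ]
        field_simp
lemma summ {f : ℂ → ℂ} (hf : Differentiable ℂ f) {C τ : ℝ}
    (hbound : ∀ z : ℂ, ‖f z‖ ≤ C * Real.exp (τ * ‖z‖)) (hC : 0 ≤ C) (hτ : 0 ≤ τ)
    (ζ : ℂ) (hζ : τ < ‖ζ‖) :
    Summable (fun n : ℕ => ‖iteratedDeriv n f 0 * ζ ^ (-(n : ℤ) - 1)‖) := by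
  set R := ‖ζ‖ with hR
  have hR0 : 0 < R := lt_of_le_of_lt hτ hζ
  set σ := max τ (R/2) with hσ
  have hσ0 : 0 < σ := lt_max_of_lt_right (by positivity)
  have hστ : τ ≤ σ := le_max_left _ _
  have hσR : σ < R := max_lt hζ (by linarith)
  apply (summable_nat_add_iff 1).mp
  have hb : Summable (fun n : ℕ => (C * Real.exp 1 / R) * (((n:ℝ)+1) * (σ/R)^(n+1))) := by
    apply Summable.mul_left
    have h0 : Summable (fun n : ℕ => (n:ℝ)^1 * (σ/R)^n) :=
      summable_pow_mul_geometric_of_norm_lt_one 1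
        (by rw [Real.norm_eq_abs, abs_of_pos (by positivity)]; exact (div_lt_one hR0).mpr hσR)
    have h1 := (summable_nat_add_iff 1).mpr h0
    apply h1.congr
    intro n
    push_cast
    ring
  apply Summable.of_nonneg_of_le (fun n => norm_nonneg _) _ hb
  intro n
  have hzp : ζ ^ (-((n+1:ℕ) : ℤ) - 1) = ((ζ^(n+2))⁻¹ : ℂ) := by
    rw [show (-((n+1:ℕ):ℤ)-1) = -(((n+2:ℕ)):ℤ) by push_cast; ring, zpow_neg, zpow_natCast]
  rw [hzp, norm_mul, norm_inv, norm_pow, ← hR]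
  have hg := growth hf hbound hC hσ0 hστ (n+1) (Nat.le_add_left 1 n)
  have heq : (C * Real.exp 1 / R) * (((n:ℝ)+1) * (σ/R)^(n+1))
      = (C * Real.exp 1 * ((n+1:ℕ):ℝ) * σ^(n+1)) * (R^(n+2))⁻¹ := by
    rw [div_pow]
    push_cast
    field_simp
    ring
  rw [heq]
  apply mul_le_mul_of_nonneg_right hg
  positivity
lemma iteratedDeriv_comp (m t : ℕ) (f : ℂ → ℂ) :
    iteratedDeriv m (iteratedDeriv t f) = iteratedDeriv (m+t) f := by
  induction m with
  | zero => simp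
  | succ m ih =>
      rw [iteratedDeriv_succ, ih, show m+1+t = (m+t)+1 by ring, iteratedDeriv_succ]

lemma sphere_ne_zero {r : ℝ} (hr : 0 < r) {ζ : ℂ} (hζ : ζ ∈ Metric.sphere (0:ℂ) r) :
    ζ ≠ 0 := by
  intro h
  rw [Metric.mem_sphere, h, dist_self] at hζ
  exact hr.ne hζ

lemma circle_term_integral_lt {r : ℝ} (hr : 0 < r) (z : ℂ) (t n : ℕ) (hn : n < t) (a : ℂ) :
    (∮ ζ in C(0, r), ζ^t * Complex.exp (ζ*z) * (a * ζ^(-(n:ℤ)-1))) = 0 := by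
  have heq : Set.EqOn (fun ζ : ℂ => ζ^t * Complex.exp (ζ*z) * (a * ζ^(-(n:ℤ)-1)))
      (fun ζ : ℂ => a * (ζ^(t-(n+1)) * Complex.exp (ζ*z))) (Metric.sphere (0:ℂ) r) := by
    intro ζ hζ
    have hζ0 : ζ ≠ 0 := sphere_ne_zero hr hζ
    have hpow : (ζ:ℂ)^t * ζ^(-(n:ℤ)-1) = ζ^(t-(n+1)) := by
      rw [← zpow_natCast ζ t, ← zpow_natCast ζ (t-(n+1)), ← zpow_add₀ hζ0]
      congr 1
      have h1 : (n+1) ≤ t := hn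
      push_cast [Nat.cast_sub h1]
      ring
    simp only
    rw [← hpow]
    ring
  rw [circleIntegral.integral_congr hr.le heq]
  apply Complex.circleIntegral_eq_zero_of_differentiable_on_off_countable hr.le
    Set.countable_empty
  · apply Continuous.continuousOn
    fun_prop
  · intro ζ _
    fun_prop

lemma circle_term_integral_ge {r : ℝ} (hr : 0 < r) (z : ℂ) (t n : ℕ) (hn : t ≤ n) (a : ℂ) :
    (∮ ζ in C(0, r), ζ^t * Complex.exp (ζ*z) * (a * ζ^(-(n:ℤ)-1)))
      = (2 * Real.pi * Complex.I) * (a * (z^(n-t) / (n-t).factorial)) := by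
  set m := n - t with hm
  set g : ℂ → ℂ := fun ζ => Complex.exp (z * ζ) with hgdef
  have hg : Differentiable ℂ g := (Complex.differentiable_exp.comp
    (differentiable_id.const_mul z))
  have hps : HasFPowerSeriesOnBall g (cauchyPowerSeries g 0 r) 0 ⊤ :=
    hg.hasFPowerSeriesOnBall 0 (R := ⟨r, hr.le⟩) (by exact_mod_cast hr)
  have h1 : m.factorial • ((cauchyPowerSeries g 0 r) m fun _ => (1:ℂ))
      = iteratedDeriv m g 0 := by
    rw [iteratedDeriv_eq_iteratedFDeriv]
    exact hps.factorial_smul 1 m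
  have h2 : iteratedDeriv m g 0 = z^m := by
    rw [hgdef, iteratedDeriv_cexp_const_mul]
    simp
  have hm0 : (m.factorial : ℂ) ≠ 0 := Nat.cast_ne_zero.mpr m.factorial_ne_zero
  have h4 : ((cauchyPowerSeries g 0 r) m fun _ => (1:ℂ)) = z^m / m.factorial := by
    rw [eq_div_iff hm0, mul_comm, ← h2, ← h1, nsmul_eq_mul]
  have h3 := cauchyPowerSeries_apply g 0 r m 1
  rw [h4] at h3
  have h5 : (∮ ζ in C(0, r), (1/(ζ-0))^m • ((ζ-0)⁻¹ • g ζ))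
      = (2 * Real.pi * Complex.I) * (z^m / m.factorial) := by
    rw [eq_comm, inv_smul_eq_iff₀ Complex.two_pi_I_ne_zero, smul_eq_mul] at h3
    exact h3
  have heq : Set.EqOn (fun ζ : ℂ => ζ^t * Complex.exp (ζ*z) * (a * ζ^(-(n:ℤ)-1)))
      (fun ζ : ℂ => a * ((1/(ζ-0))^m • ((ζ-0)⁻¹ • g ζ))) (Metric.sphere (0:ℂ) r) := by
    intro ζ hζ
    have hζ0 : ζ ≠ 0 := sphere_ne_zero hr hζ
    simp only [sub_zero, smul_eq_mul, one_div]
    have hpow : (ζ:ℂ)^t * ζ^(-(n:ℤ)-1) = (ζ⁻¹)^m * ζ⁻¹ := by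
      rw [← zpow_natCast ζ t, ← zpow_add₀ hζ0, inv_pow, ← zpow_natCast ζ m,
        ← zpow_neg, ← zpow_neg_one, ← zpow_add₀ hζ0]
      congr 1
      have : (m:ℤ) = (n:ℤ) - t := by rw [hm]; push_cast [Nat.cast_sub hn]; ring
      rw [this]
      ring
    rw [hgdef]
    simp only
    rw [mul_comm ζ z]
    calc ζ^t * Complex.exp (z*ζ) * (a * ζ^(-(n:ℤ)-1))
        = a * ((ζ^t * ζ^(-(n:ℤ)-1)) * Complex.exp (z*ζ)) := by ring
      _ = a * (ζ⁻¹^m * (ζ⁻¹ * Complex.exp (z*ζ))) := by rw [hpow]; ring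
  rw [circleIntegral.integral_congr hr.le heq, circleIntegral.integral_const_mul, h5]
  ring
lemma hasSum_circle {r : ℝ} (hr : 0 < r) (z : ℂ) (t : ℕ) (a : ℕ → ℂ)
    (hsum : Summable (fun n : ℕ => ‖a n * (r:ℂ) ^ (-(n:ℤ)-1)‖)) :
    HasSum (fun n : ℕ => ∮ ζ in C(0, r), ζ^t * Complex.exp (ζ*z) * (a n * ζ^(-(n:ℤ)-1)))
      (∮ ζ in C(0, r), ζ^t * Complex.exp (ζ*z) * (∑' n, a n * ζ^(-(n:ℤ)-1))) := by
  have hnr : ‖((r:ℝ):ℂ)‖ = r := by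
    rw [Complex.norm_real, Real.norm_eq_abs, abs_of_pos hr]
  have hnorm_eq : ∀ (n : ℕ) (ζ : ℂ), ‖ζ‖ = r →
      ‖a n * ζ^(-(n:ℤ)-1)‖ = ‖a n * (r:ℂ)^(-(n:ℤ)-1)‖ := by
    intro n ζ hζ
    rw [norm_mul, norm_mul, norm_zpow, norm_zpow, hζ, hnr]
  have hcm : ∀ θ : ℝ, ‖circleMap 0 r θ‖ = r := by
    intro θ
    rw [norm_circleMap_zero, abs_of_pos hr]
  simp only [circleIntegral, deriv_circleMap]
  apply intervalIntegral.hasSum_integral_of_dominated_convergence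
    (fun n _ => (r * (r^t * Real.exp (r * ‖z‖))) * ‖a n * (r:ℂ)^(-(n:ℤ)-1)‖)
  · intro n
    apply Continuous.aestronglyMeasurable
    refine ((continuous_circleMap 0 r).mul continuous_const).smul ?_
    refine (((continuous_circleMap 0 r).pow t).mul
      (Complex.continuous_exp.comp ((continuous_circleMap 0 r).mul continuous_const))).mul
      (continuous_const.mul ?_)
    exact (continuous_circleMap 0 r).zpow₀ _ (fun θ => Or.inl (circleMap_ne_center hr.ne'))
  · intro n
    filter_upwards with θ _
    set ζ := circleMap 0 r θ with hζdef
    have h0 : ‖ζ‖ = r := hcm θ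
    have h2 : ‖Complex.exp (ζ*z)‖ ≤ Real.exp (r * ‖z‖) := by
      rw [Complex.norm_exp]
      apply Real.exp_le_exp.mpr
      calc (ζ*z).re ≤ ‖ζ*z‖ := Complex.re_le_norm _
        _ = r * ‖z‖ := by rw [norm_mul, h0]
    have key : ‖(ζ * Complex.I) • (ζ^t * Complex.exp (ζ*z) * (a n * ζ^(-(n:ℤ)-1)))‖
        = (r * r^t * (‖a n‖ * r^(-(n:ℤ)-1))) * ‖Complex.exp (ζ*z)‖ := by
      simp only [smul_eq_mul, norm_mul, norm_pow, norm_zpow, Complex.norm_I, mul_one, h0]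
      ring
    rw [key, norm_mul, norm_zpow, hnr]
    calc (r * r^t * (‖a n‖ * r^(-(n:ℤ)-1))) * ‖Complex.exp (ζ*z)‖
        ≤ (r * r^t * (‖a n‖ * r^(-(n:ℤ)-1))) * Real.exp (r * ‖z‖) := by
          apply mul_le_mul_of_nonneg_left h2
          positivity
      _ = r * (r^t * Real.exp (r * ‖z‖)) * (‖a n‖ * r^(-(n:ℤ)-1)) := by ring
  · filter_upwards with θ _
    exact hsum.mul_left _
  · exact intervalIntegrable_const
  · filter_upwards with θ _
    set ζ := circleMap 0 r θ with hζdef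
    have hS : Summable (fun n => a n * ζ^(-(n:ℤ)-1)) := by
      apply Summable.of_norm
      apply hsum.congr
      intro n
      exact (hnorm_eq n ζ (hcm θ)).symm
    have := ((hS.hasSum.mul_left (ζ^t * Complex.exp (ζ*z))).mul_left (ζ * Complex.I))
    simpa only [smul_eq_mul] using this

/-- **Laplace transform representation.** Let `f` be entire with `|f(z)| ≤ C e^{τ|z|}`
and let `F(ζ) = Σ_n f^{(n)}(0) ζ^{−n−1}` be its Laplace transform; the series converges
absolutely for `|ζ| > τ`. Then for every `r > τ`, `t ≥ 0` and `z ∈ ℂ`,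
`f^{(t)}(z) = (1/(2πi)) ∮_{|ζ|=r} ζ^t e^{ζz} F(ζ) dζ`. -/
theorem laplace_transform_representation (f : ℂ → ℂ)
    (hf : Differentiable ℂ f) (τ C : ℝ) (hτ : 0 ≤ τ) (hC : 0 < C)
    (hbound : ∀ z : ℂ, ‖f z‖ ≤ C * Real.exp (τ * ‖z‖)) :
    (∀ ζ : ℂ, τ < ‖ζ‖ →
      Summable (fun n : ℕ => ‖iteratedDeriv n f 0 * ζ ^ (-(n : ℤ) - 1)‖)) ∧
    (∀ r : ℝ, τ < r → ∀ (t : ℕ) (z : ℂ),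
      iteratedDeriv t f z =
        (1 / (2 * π * Complex.I)) *
          ∮ ζ in C(0, r),
            ζ ^ t * Complex.exp (ζ * z) *
              (∑' n : ℕ, iteratedDeriv n f 0 * ζ ^ (-(n : ℤ) - 1))) := by
  constructor
  · intro ζ hζ
    exact summ hf hbound hC.le hτ ζ hζ
  · intro r hr t z
    have hr0 : 0 < r := lt_of_le_of_lt hτ hr
    have hrn : ‖((r:ℝ):ℂ)‖ = r := by
      rw [Complex.norm_real, Real.norm_eq_abs, abs_of_pos hr0]
    have hsum : Summable (fun n : ℕ => ‖iteratedDeriv n f 0 * ((r:ℝ):ℂ)^(-(n:ℤ)-1)‖) :=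
      summ hf hbound hC.le hτ _ (by rw [hrn]; exact hr)
    have hswap := hasSum_circle hr0 z t (fun n => iteratedDeriv n f 0) hsum
    set c : ℕ → ℂ := fun n =>
      ∮ ζ in C(0, r), ζ^t * Complex.exp (ζ*z) * (iteratedDeriv n f 0 * ζ^(-(n:ℤ)-1)) with hc
    have hct : ∀ m : ℕ, c (m+t)
        = (2*π*Complex.I) * ((m.factorial:ℂ)⁻¹ * iteratedDeriv (m+t) f 0 * z^m) := by
      intro m
      rw [hc]
      simp only
      rw [circle_term_integral_ge hr0 z t (m+t) (Nat.le_add_left t m) _]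
      congr 1
      rw [show m+t-t = m by omega, div_eq_mul_inv]
      ring
    have hzero : ∀ i < t, c i = 0 := fun i hi => circle_term_integral_lt hr0 z t i hi _
    have hdt : Differentiable ℂ (iteratedDeriv t f) := by
      apply (hf.contDiff (n := (⊤ : WithTop ℕ∞))).differentiable_iteratedDeriv t
      exact_mod_cast WithTop.coe_lt_top (t : ℕ∞)
    have htaylor := Complex.hasSum_taylorSeries_of_entire hdt 0 z
    have h2 : HasSum (fun m => c (m+t)) ((2*π*Complex.I) * iteratedDeriv t f z) := by
      have hs := htaylor.mul_left (2*π*Complex.I)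
      have heq : (fun m : ℕ => (2*π*Complex.I) *
          ((m.factorial:ℂ)⁻¹ • (z - 0)^m • iteratedDeriv m (iteratedDeriv t f) 0))
          = fun m => c (m+t) := by
        funext m
        rw [hct m, ← iteratedDeriv_comp m t f]
        simp only [smul_eq_mul, sub_zero]
        ring
      exact heq ▸ hs
    have h3 : HasSum c ((2*π*Complex.I) * iteratedDeriv t f z) := by
      have h4 := (hasSum_nat_add_iff t).mp h2
      simpa [Finset.sum_eq_zero (fun i hi => hzero i (Finset.mem_range.mp hi))] using h4
    have hfull : (∮ ζ in C(0, r), ζ^t * Complex.exp (ζ*z) *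
        (∑' n : ℕ, iteratedDeriv n f 0 * ζ^(-(n:ℤ)-1)))
        = (2*π*Complex.I) * iteratedDeriv t f z := hswap.unique h3
    rw [hfull]
    have h2pi : (2*(π:ℂ)*Complex.I) ≠ 0 := Complex.two_pi_I_ne_zero
    field_simp
end
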